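/- arXiv:1105.5624 — 3 statements merged into one kernel-verified Lean document; each statement's English description precedes it below -/
import Mathlib

section
/- Let x ∈ (0,1) and let Z : ℂ → ℂ be differentiable on ℂ \ {1} with Z(s) = ∑_{n=0}^∞ (n + i x)^{-s} for all s with Re(s) > 1. Then for every m ∈ ℕ, the real part of Z(-2m-1) equals (2m+1)! · ∑_{j=0}^{m} (-1)^{j+1} B_{2(m-j+1)} x^{2j} / ( (2(m-j+1))! (2j)! ) + (-1)^m x^{2m+2} / (2(m+1)). -/
open Complex Real

section HurwitzAux
open Complex Finset


noncomputable def cb (s : ℂ) (j : ℕ) : ℂ := (∏ i ∈ Finset.range j, (-s - i)) / (j.factorial : ℂ)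

noncomputable def gg (x : ℝ) (K : ℕ) (s : ℂ) (n : ℕ) (t : ℝ) : ℂ :=
  ((n : ℂ) + t * (Complex.I * x)) ^ (-s)
    - ∑ j ∈ Finset.range K, cb s j * ((t : ℂ) * (Complex.I * x)) ^ j * (n : ℂ) ^ (-s - j)

lemma cb_zero (s : ℂ) : cb s 0 = 1 := by simp [cb]

lemma cb_succ (s : ℂ) (j : ℕ) : ((j : ℂ) + 1) * cb s (j + 1) = -s * cb (s + 1) j := by
  have h : ∏ i ∈ Finset.range (j + 1), (-s - (i : ℂ))
      = (∏ i ∈ Finset.range j, (-(s + 1) - i)) * (-s) := by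
    rw [Finset.prod_range_succ']
    congr 1
    · exact Finset.prod_congr rfl fun i _ => by push_cast; ring
    · simp
  have h0 : ((j.factorial : ℂ)) ≠ 0 := by exact_mod_cast j.factorial_ne_zero
  have h1 : (((j + 1).factorial : ℂ)) ≠ 0 := by exact_mod_cast (j + 1).factorial_ne_zero
  have hj : ((j : ℂ) + 1) ≠ 0 := Nat.cast_add_one_ne_zero j
  unfold cb
  rw [h, Nat.factorial_succ]
  push_cast
  field_simp

lemma slit_aux (x : ℝ) (n : ℕ) (hn : 0 < n) (t : ℝ) :
    ((n : ℂ) + t * (Complex.I * x)) ∈ Complex.slitPlane := by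
  refine Or.inl ?_
  simp only [add_re, natCast_re, mul_re, ofReal_re, I_re, ofReal_im, I_im, mul_im]
  simp
  positivity

lemma gg_hasDerivAt (x : ℝ) (K : ℕ) (s : ℂ) (n : ℕ) (hn : 0 < n) (t : ℝ) :
    HasDerivAt (fun t : ℝ => gg x (K + 1) s n t)
      (-s * (Complex.I * x) * gg x K (s + 1) n t) t := by
  set c : ℂ := Complex.I * x with hc
  have ht : HasDerivAt (fun t : ℝ => ((t : ℝ) : ℂ)) 1 t := by
    exact Complex.ofRealCLM.hasDerivAt (x := t)
  have hC : HasDerivAt (fun z : ℂ => ((n : ℂ) + z * c) ^ (-s))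
      (-s * ((n : ℂ) + (t : ℂ) * c) ^ (-s - 1) * (1 * c)) (t : ℂ) := by
    have hb : HasDerivAt (fun z : ℂ => ((n : ℂ) + z * c)) (1 * c) (t : ℂ) :=
      ((hasDerivAt_id ((t : ℝ) : ℂ)).mul_const c).const_add _
    exact hb.cpow_const (slit_aux x n hn t)
  have h2 : HasDerivAt (fun t : ℝ => ((n : ℂ) + (t : ℂ) * c) ^ (-s))
      (-s * ((n : ℂ) + (t : ℂ) * c) ^ (-s - 1) * (1 * c)) t := hC.comp_ofReal
  have h3 : ∀ j : ℕ, HasDerivAt (fun t : ℝ => cb s j * ((t : ℂ) * c) ^ j * (n : ℂ) ^ (-s - j))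
      (cb s j * ((j : ℂ) * ((t : ℂ) * c) ^ (j - 1) * c) * (n : ℂ) ^ (-s - j)) t := by
    intro j
    have hz : HasDerivAt (fun z : ℂ => cb s j * (z * c) ^ j * (n : ℂ) ^ (-s - j))
        (cb s j * ((j : ℂ) * ((t : ℂ) * c) ^ (j - 1) * (1 * c)) * (n : ℂ) ^ (-s - j)) (t : ℂ) := by
      have hb : HasDerivAt (fun z : ℂ => z * c) (1 * c) ((t : ℝ) : ℂ) :=
        (hasDerivAt_id _).mul_const c
      exact ((hb.pow j).const_mul (cb s j)).mul_const _
    have := hz.comp_ofReal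
    convert this using 1
    ring
  have h4 : HasDerivAt (fun t : ℝ => ∑ j ∈ Finset.range (K + 1),
        cb s j * ((t : ℂ) * c) ^ j * (n : ℂ) ^ (-s - j))
      (∑ j ∈ Finset.range (K + 1),
        cb s j * ((j : ℂ) * ((t : ℂ) * c) ^ (j - 1) * c) * (n : ℂ) ^ (-s - j)) t :=
    HasDerivAt.fun_sum fun j _ => h3 j
  have h5 := h2.sub h4
  convert h5 using 1
  · rfl
  · rfl
  unfold gg
  rw [Finset.sum_range_succ']
  have e0 : cb s 0 * ((0 : ℂ) * ((t : ℂ) * c) ^ (0 - 1) * c) * (n : ℂ) ^ (-s - (0:ℕ)) = 0 := by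
    simp
  push_cast at e0 ⊢
  rw [e0, add_zero]
  have e1 : ∀ j : ℕ, cb s (j + 1) * (((j : ℂ) + 1) * ((t : ℂ) * c) ^ j * c) * (n : ℂ) ^ (-s - ((j:ℂ) + 1))
      = -s * c * (cb (s + 1) j * ((t : ℂ) * c) ^ j * (n : ℂ) ^ (-(s + 1) - j)) := by
    intro j
    have := cb_succ s j
    have e2 : -s - ((j : ℂ) + 1) = -(s + 1) - j := by ring
    rw [e2]
    calc cb s (j + 1) * (((j : ℂ) + 1) * ((t : ℂ) * c) ^ j * c) * (n : ℂ) ^ (-(s+1) - j)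
        = (((j : ℂ) + 1) * cb s (j + 1)) * (((t : ℂ) * c) ^ j * c) * (n : ℂ) ^ (-(s+1) - j) := by ring
      _ = (-s * cb (s + 1) j) * (((t : ℂ) * c) ^ j * c) * (n : ℂ) ^ (-(s+1) - j) := by rw [this]
      _ = -s * c * (cb (s + 1) j * ((t : ℂ) * c) ^ j * (n : ℂ) ^ (-(s + 1) - j)) := by ring
  rw [mul_sub, Finset.mul_sum]
  congr 1
  · rw [show -(s + 1) = -s - 1 by ring]; ring
  · exact Finset.sum_congr rfl fun j _ => (e1 j).symm

lemma cb_def (s : ℂ) (j : ℕ) : cb s j = (∏ i ∈ Finset.range j, (-s - i)) / (j.factorial : ℂ) := rfl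

lemma gg_def (x : ℝ) (K : ℕ) (s : ℂ) (n : ℕ) (t : ℝ) : gg x K s n t =
  ((n : ℂ) + t * (Complex.I * x)) ^ (-s)
    - ∑ j ∈ Finset.range K, cb s j * ((t : ℂ) * (Complex.I * x)) ^ j * (n : ℂ) ^ (-s - j) := rfl


lemma im_aux (x t : ℝ) (n : ℕ) : ((n : ℂ) + t * (Complex.I * x)).im = t * x := by
  simp

lemma re_aux (x t : ℝ) (n : ℕ) : ((n : ℂ) + t * (Complex.I * x)).re = n := by
  simp

lemma norm_cpow_aux (s : ℂ) (hs : 0 ≤ s.re) (n : ℕ) (hn : 1 ≤ n) (x t : ℝ) :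
    ‖((n : ℂ) + t * (Complex.I * x)) ^ (-s)‖
      ≤ Real.exp (Real.pi / 2 * |s.im|) * (n : ℝ) ^ (-s.re) := by
  set z : ℂ := (n : ℂ) + t * (Complex.I * x) with hz
  have hre : z.re = n := re_aux x t n
  have hn' : (0:ℝ) < n := by exact_mod_cast hn
  have hz0 : z ≠ 0 := by
    intro h
    rw [h] at hre
    simp only [Complex.zero_re] at hre
    exact absurd hre.symm (ne_of_gt hn')
  have habs : (n : ℝ) ≤ ‖z‖ := by
    calc (n : ℝ) = |z.re| := by rw [hre]; exact (abs_of_pos hn').symm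
    _ ≤ ‖z‖ := Complex.abs_re_le_norm z
  have harg : |z.arg| ≤ Real.pi / 2 := Complex.abs_arg_le_pi_div_two_iff.mpr (by rw [hre]; positivity)
  rw [Complex.norm_cpow_of_ne_zero hz0]
  have h1 : ‖z‖ ^ (-s).re ≤ (n : ℝ) ^ (-s.re) := by
    rw [Complex.neg_re]
    exact Real.rpow_le_rpow_of_nonpos hn' habs (by linarith)
  have h2 : Real.exp (-(Real.pi / 2 * |s.im|)) ≤ Real.exp (z.arg * (-s).im) := by
    apply Real.exp_le_exp.mpr
    rw [Complex.neg_im]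
    have : |z.arg * (-s.im)| ≤ Real.pi / 2 * |s.im| := by
      rw [abs_mul, abs_neg]
      exact mul_le_mul_of_nonneg_right harg (abs_nonneg _)
    linarith [neg_abs_le (z.arg * (-s.im))]
  calc ‖z‖ ^ (-s).re / Real.exp (z.arg * (-s).im)
      ≤ (n : ℝ) ^ (-s.re) / Real.exp (-(Real.pi / 2 * |s.im|)) := by
        apply div_le_div₀ (by positivity) h1 (Real.exp_pos _) h2
    _ = Real.exp (Real.pi / 2 * |s.im|) * (n : ℝ) ^ (-s.re) := by
        rw [Real.exp_neg]
        field_simp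

lemma gg_zero (x : ℝ) (K : ℕ) (s : ℂ) (n : ℕ) : gg x (K + 1) s n 0 = 0 := by
  rw [gg_def]
  push_cast
  have : ∑ j ∈ Finset.range (K + 1), cb s j * ((0 : ℂ) * (Complex.I * x)) ^ j * (n : ℂ) ^ (-s - j)
      = cb s 0 * ((0 : ℂ) * (Complex.I * x)) ^ 0 * (n : ℂ) ^ (-s - (0:ℕ)) := by
    apply Finset.sum_eq_single_of_mem 0 (Finset.mem_range.mpr (by omega))
    intro j _ hj
    rw [zero_mul, zero_pow hj, mul_zero, zero_mul]
  rw [this, cb_zero]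
  push_cast
  simp

lemma gg_cont (x : ℝ) (K : ℕ) (s : ℂ) (n : ℕ) (hn : 1 ≤ n) :
    Continuous (fun t : ℝ => gg x K s n t) := by
  simp only [gg_def]
  apply Continuous.sub
  · apply Continuous.cpow _ continuous_const (fun a => slit_aux x n (by omega) a)
    exact continuous_const.add ((Complex.continuous_ofReal.mul continuous_const))
  · apply continuous_finset_sum
    intro j _
    exact (continuous_const.mul ((Complex.continuous_ofReal.mul continuous_const).pow j)).mul continuous_const

lemma gg_bound (x : ℝ) (hx : 0 ≤ x) :
    ∀ (K : ℕ) (s : ℂ), 0 ≤ s.re + K → ∀ (n : ℕ), 1 ≤ n → ∀ t ∈ Set.Icc (0:ℝ) 1,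
      ‖gg x K s n t‖ ≤ (∏ i ∈ Finset.range K, (‖s‖ + i)) * Real.exp (Real.pi / 2 * |s.im|)
        * (t * x) ^ K * (n : ℝ) ^ (-(s.re + K)) := by
  intro K
  induction K with
  | zero =>
    intro s hs n hn t ht
    simp only [Finset.range_zero, Finset.prod_empty, one_mul, pow_zero, mul_one,
      Nat.cast_zero, add_zero] at hs ⊢
    rw [gg_def]
    simp only [Finset.range_zero, Finset.sum_empty, sub_zero]
    exact norm_cpow_aux s hs n hn x t
  | succ K ih =>
    intro s hs n hn t ht
    obtain ⟨ht0, ht1⟩ := ht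
    set c : ℂ := Complex.I * x with hc
    have hFTC := intervalIntegral.integral_eq_sub_of_hasDerivAt
      (f := fun r : ℝ => gg x (K + 1) s n r)
      (f' := fun u : ℝ => -s * c * gg x K (s + 1) n u)
      (a := 0) (b := t)
      (fun u _ => gg_hasDerivAt x K s n (by omega) u)
      ((continuous_const.mul (gg_cont x K (s+1) n hn)).intervalIntegrable 0 t)
    beta_reduce at hFTC
    rw [gg_zero, sub_zero] at hFTC
    set A : ℝ := (∏ i ∈ Finset.range K, (‖s‖ + 1 + (i:ℝ))) * Real.exp (Real.pi / 2 * |s.im|) with hA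
    have hA0 : 0 ≤ ∏ i ∈ Finset.range K, (‖s‖ + 1 + i) :=
      Finset.prod_nonneg fun i _ => by positivity
    have hnormc : ‖c‖ = x := by
      rw [hc, norm_mul, Complex.norm_I, one_mul, Complex.norm_real, Real.norm_eq_abs,
        _root_.abs_of_nonneg hx]
    have hbound : ∀ u ∈ Set.uIoc (0:ℝ) t,
        ‖-s * c * gg x K (s + 1) n u‖
          ≤ ‖s‖ * x * (A * (t * x) ^ K * (n:ℝ) ^ (-(s.re + ((K:ℝ) + 1)))) := by
      intro u hu
      rw [Set.uIoc_of_le ht0] at hu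
      obtain ⟨hu0, hut⟩ := hu
      have h1 := ih (s + 1) (by rw [Complex.add_re, Complex.one_re]; push_cast at hs; linarith) n hn u
        ⟨le_of_lt hu0, le_trans hut ht1⟩
      have h2 : (∏ i ∈ Finset.range K, (‖s + 1‖ + (i:ℝ))) ≤ ∏ i ∈ Finset.range K, (‖s‖ + 1 + (i:ℝ)) := by
        apply Finset.prod_le_prod (fun i _ => by positivity)
        intro i _
        have := norm_add_le s (1:ℂ)
        simp only [norm_one] at this
        linarith
      have h3 : (u * x) ^ K ≤ (t * x) ^ K := by
        apply pow_le_pow_left₀ (by positivity)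
        exact mul_le_mul_of_nonneg_right hut hx
      have him : (s + 1).im = s.im := by simp
      have hre2 : (s + 1).re = s.re + 1 := by simp
      rw [him, hre2] at h1
      have hnorm : ‖-s * c * gg x K (s + 1) n u‖ = ‖s‖ * x * ‖gg x K (s + 1) n u‖ := by
        rw [norm_mul, norm_mul, norm_neg, hnormc]
      rw [hnorm]
      have h4 : ‖gg x K (s + 1) n u‖
          ≤ A * (t * x) ^ K * (n:ℝ) ^ (-(s.re + ((K:ℝ) + 1))) := by
        rw [show -(s.re + ((K:ℝ) + 1)) = -(s.re + 1 + (K:ℝ)) by ring]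
        refine le_trans h1 ?_
        have hAeq : A * (t * x) ^ K * (n:ℝ) ^ (-(s.re + 1 + (K:ℝ)))
            = (∏ i ∈ Finset.range K, (‖s‖ + 1 + (i:ℝ))) * Real.exp (Real.pi / 2 * |s.im|)
              * (t * x) ^ K * (n:ℝ) ^ (-(s.re + 1 + (K:ℝ))) := by rw [hA]
        rw [hAeq]
        gcongr
        all_goals first | exact h2 | exact h3 | exact hA0 | positivity
      exact mul_le_mul_of_nonneg_left h4 (by positivity)
    have hle := intervalIntegral.norm_integral_le_of_norm_le_const hbound
    rw [hFTC] at hle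
    rw [sub_zero, _root_.abs_of_nonneg ht0] at hle
    refine le_trans hle (le_of_eq ?_)
    have hprod : (∏ i ∈ Finset.range (K+1), (‖s‖ + (i:ℝ))) = ‖s‖ * ∏ i ∈ Finset.range K, (‖s‖ + 1 + (i:ℝ)) := by
      rw [Finset.prod_range_succ']
      push_cast
      rw [add_zero, mul_comm]
      congr 1
      exact Finset.prod_congr rfl fun i _ => by ring
    push_cast
    rw [hA, hprod, pow_succ]
    ring



noncomputable def GG (x : ℝ) (K : ℕ) (s : ℂ) : ℂ := ∑' n : ℕ, gg x K s (n + 1) 1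

lemma summable_shift (p : ℝ) (hp : 1 < p) : Summable (fun n : ℕ => ((n : ℝ) + 1) ^ (-p)) := by
  have h1 : Summable (fun n : ℕ => (n : ℝ) ^ (-p)) :=
    Real.summable_nat_rpow.mpr (by linarith)
  have h2 := h1.comp_injective Nat.succ_injective
  apply h2.congr
  intro n
  simp [Function.comp, Nat.succ_eq_add_one]

lemma nplus_ne (n : ℕ) (x t : ℝ) : ((n : ℂ) + 1 + t * (Complex.I * x)) ≠ 0 := by
  have hre : (0:ℝ) < ((n : ℂ) + 1 + t * (Complex.I * x)).re := by
    simp only [Complex.add_re, Complex.natCast_re, Complex.one_re, Complex.mul_re,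
      Complex.ofReal_re, Complex.I_re, Complex.ofReal_im, Complex.I_im, Complex.mul_im]
    simp
    positivity
  intro h
  rw [h] at hre
  simp at hre

lemma cb_diff (j : ℕ) : Differentiable ℂ (fun s : ℂ => cb s j) := by
  have : (fun s : ℂ => cb s j)
      = fun s : ℂ => (∏ i ∈ Finset.range j, (-s - (i:ℂ))) / (j.factorial : ℂ) := by
    funext s; rw [cb_def]
  rw [this]
  apply Differentiable.div_const
  apply Differentiable.fun_finsetProd
  intro i _
  exact (differentiable_id.neg).sub_const _

lemma gg_diff_s (x : ℝ) (K : ℕ) (n : ℕ) (t : ℝ) :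
    Differentiable ℂ (fun s : ℂ => gg x K s (n + 1) t) := by
  have : (fun s : ℂ => gg x K s (n + 1) t)
      = fun s : ℂ => (((n:ℂ) + 1) + t * (Complex.I * x)) ^ (-s)
        - ∑ j ∈ Finset.range K, cb s j * ((t : ℂ) * (Complex.I * x)) ^ j * ((n:ℂ) + 1) ^ (-s - j) := by
    funext s; rw [gg_def]; push_cast; ring_nf
  rw [this]
  apply Differentiable.sub
  · exact differentiable_neg.const_cpow (Or.inl (nplus_ne n x t))
  · apply Differentiable.fun_sum
    intro j _
    have h1 : ((n:ℂ) + 1) ≠ 0 := Nat.cast_add_one_ne_zero n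
    exact ((cb_diff j).mul_const _).mul
      (((differentiable_id.neg).sub_const _).const_cpow (Or.inl h1))

lemma GG_diffAt (x : ℝ) (hx : 0 ≤ x) (K : ℕ) {s₁ : ℂ} (h : 1 - (K:ℝ) < s₁.re) :
    DifferentiableAt ℂ (GG x K) s₁ := by
  set σ : ℝ := (1 - (K:ℝ) + s₁.re) / 2 with hσ
  set r : ℝ := s₁.re - σ with hr
  have hr0 : 0 < r := by rw [hr, hσ]; linarith
  have hσK : 1 < σ + K := by rw [hσ]; linarith
  set R : ℝ := ‖s₁‖ + r with hR
  have hball : ∀ s ∈ Metric.ball s₁ r, σ < s.re ∧ ‖s‖ ≤ R ∧ |s.im| ≤ R := by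
    intro s hs
    rw [Metric.mem_ball, dist_eq_norm] at hs
    have h1 : |s.re - s₁.re| ≤ ‖s - s₁‖ := by
      have := Complex.abs_re_le_norm (s - s₁)
      rwa [Complex.sub_re] at this
    have h2 : ‖s‖ ≤ R := by
      rw [hR]
      calc ‖s‖ = ‖s₁ + (s - s₁)‖ := by ring_nf
        _ ≤ ‖s₁‖ + ‖s - s₁‖ := norm_add_le _ _
        _ ≤ ‖s₁‖ + r := by linarith
    refine ⟨?_, h2, le_trans (Complex.abs_im_le_norm s) h2⟩
    have := abs_le.mp h1
    linarith [this.1]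
  set u : ℕ → ℝ := fun n => (∏ i ∈ Finset.range K, (R + i)) * Real.exp (Real.pi / 2 * R)
    * x ^ K * ((n : ℝ) + 1) ^ (-(σ + K)) with hu
  have husum : Summable u := by
    apply Summable.mul_left
    exact summable_shift (σ + K) hσK
  have hdiff : DifferentiableOn ℂ (fun s : ℂ => ∑' n : ℕ, gg x K s (n + 1) 1)
      (Metric.ball s₁ r) := by
    apply differentiableOn_tsum_of_summable_norm husum
      (fun n => (gg_diff_s x K n 1).differentiableOn) Metric.isOpen_ball
    intro n s hs
    obtain ⟨h1, h2, h3⟩ := hball s hs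
    have hb := gg_bound x hx K s (by linarith) (n + 1) (by omega) 1
      (by constructor <;> norm_num)
    push_cast at hb
    rw [one_mul] at hb
    refine le_trans hb ?_
    simp only [hu]
    gcongr
    all_goals first
      | positivity
      | exact Finset.prod_nonneg fun i _ => by positivity
      | exact Finset.prod_le_prod (fun i _ => by positivity) (fun i _ => by linarith [norm_nonneg s])
      | exact Real.exp_le_exp.mpr (by nlinarith [Real.pi_pos, abs_nonneg s.im])
      | exact Real.rpow_le_rpow_of_exponent_le (by linarith [Nat.cast_nonneg (α := ℝ) n]) (by linarith)
      | linarith [norm_nonneg s]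
      | nlinarith [Real.pi_pos, abs_nonneg s.im]
  have : GG x K = fun s : ℂ => ∑' n : ℕ, gg x K s (n + 1) 1 := rfl
  rw [this]
  exact hdiff.differentiableAt (Metric.ball_mem_nhds s₁ hr0)

lemma gg_summable (x : ℝ) (hx : 0 ≤ x) (K : ℕ) (s : ℂ) (h : 1 < s.re + K) :
    Summable (fun n : ℕ => gg x K s (n + 1) 1) := by
  apply Summable.of_norm
  have hb : ∀ n : ℕ, ‖gg x K s (n + 1) 1‖
      ≤ (∏ i ∈ Finset.range K, (‖s‖ + i)) * Real.exp (Real.pi / 2 * |s.im|) * x ^ K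
        * ((n : ℝ) + 1) ^ (-(s.re + K)) := by
    intro n
    have hb := gg_bound x hx K s (by linarith) (n + 1) (by omega) 1 (by constructor <;> norm_num)
    refine le_trans hb (le_of_eq ?_)
    push_cast
    ring
  exact Summable.of_nonneg_of_le (fun n => norm_nonneg _) hb
    (Summable.mul_left _ (summable_shift _ h))



noncomputable def zt : ℂ → ℂ := Function.update (fun s => riemannZeta s - 1 / (s - 1)) 1
  (Filter.limUnder (nhdsWithin 1 {1}ᶜ) (fun s => riemannZeta s - 1 / (s - 1)))

lemma zt_apply {s : ℂ} (hs : s ≠ 1) : zt s = riemannZeta s - 1 / (s - 1) :=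
  Function.update_of_ne hs _ _

lemma zt_diff : Differentiable ℂ zt := by
  have hfd : ∀ w : ℂ, w ≠ 1 → DifferentiableAt ℂ (fun s => riemannZeta s - 1 / (s - 1)) w :=
    fun w hw => (differentiableAt_riemannZeta hw).sub
      ((differentiableAt_const 1).div (differentiableAt_id.sub_const 1) (sub_ne_zero.mpr hw))
  have htend := tendsto_riemannZeta_sub_one_div
  set γ : ℂ := (Real.eulerMascheroniConstant : ℂ)
  have hev : ∀ᶠ w in nhdsWithin 1 {(1:ℂ)}ᶜ, ‖riemannZeta w - 1 / (w - 1)‖ ≤ ‖γ‖ + 1 := by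
    exact htend.norm.eventually_le_const (by linarith [norm_nonneg γ] : ‖γ‖ < ‖γ‖ + 1)
  rw [eventually_nhdsWithin_iff, Metric.eventually_nhds_iff] at hev
  obtain ⟨ε, hε, hevb⟩ := hev
  have hupd : DifferentiableOn ℂ zt (Metric.ball 1 ε) := by
    apply Complex.differentiableOn_update_limUnder_of_bddAbove (Metric.ball_mem_nhds 1 hε)
    · intro w hw
      exact (hfd w (by simpa using hw.2)).differentiableWithinAt
    · rw [bddAbove_def]
      refine ⟨‖γ‖ + 1, ?_⟩
      rintro y ⟨w, hw, rfl⟩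
      exact hevb (by simpa [dist_eq_norm] using hw.1) (by simpa using hw.2)
  intro w
  by_cases hw : w = 1
  · subst hw
    exact hupd.differentiableAt (Metric.ball_mem_nhds 1 hε)
  · refine (hfd w hw).congr_of_eventuallyEq ?_
    filter_upwards [isOpen_compl_singleton.mem_nhds (by simpa using hw : w ∈ ({(1:ℂ)}ᶜ : Set ℂ))]
      with z hz
    exact zt_apply (by simpa using hz)

noncomputable def WW (x : ℝ) (K : ℕ) (s : ℂ) : ℂ :=
  (Complex.I * x) ^ (-s) + riemannZeta s
    + ∑ j ∈ Finset.Ico 1 K, (Complex.I * x) ^ j *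
        (cb s j * zt (s + j) - (∏ i ∈ Finset.range (j - 1), (-s - i)) / (j.factorial : ℂ))
    + GG x K s

lemma cb_pole (s : ℂ) (j : ℕ) (hj : 1 ≤ j) (hs : s + j ≠ 1) :
    cb s j * zt (s + j) - (∏ i ∈ Finset.range (j - 1), (-s - i)) / (j.factorial : ℂ)
      = cb s j * riemannZeta (s + j) := by
  have key : cb s j
      = -((s + j - 1) * ((∏ i ∈ Finset.range (j - 1), (-s - i)) / (j.factorial : ℂ))) := by
    obtain ⟨j', rfl⟩ : ∃ j', j = j' + 1 := ⟨j - 1, by omega⟩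
    rw [cb_def, Finset.prod_range_succ]
    simp only [Nat.add_sub_cancel]
    have hf : ((j' + 1).factorial : ℂ) ≠ 0 := by exact_mod_cast (j' + 1).factorial_ne_zero
    field_simp
    push_cast
    ring
  have hne : s + (j:ℂ) - 1 ≠ 0 := sub_ne_zero.mpr hs
  have h3 : cb s j * (1 / (s + j - 1))
      = -((∏ i ∈ Finset.range (j - 1), (-s - i)) / (j.factorial : ℂ)) := by
    rw [key, mul_one_div, neg_div, mul_div_cancel_left₀ _ hne]
  rw [zt_apply hs]
  calc cb s j * (riemannZeta (s + j) - 1 / (s + j - 1))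
        - (∏ i ∈ Finset.range (j - 1), (-s - i)) / (j.factorial : ℂ)
      = cb s j * riemannZeta (s + j)
        - (cb s j * (1 / (s + j - 1)) + (∏ i ∈ Finset.range (j - 1), (-s - i)) / (j.factorial : ℂ)) := by
        ring
    _ = cb s j * riemannZeta (s + j) := by rw [h3]; ring

lemma WW_diffAt (x : ℝ) (hx : 0 < x) (K : ℕ) {s : ℂ} (h1 : 1 - (K:ℝ) < s.re) (h2 : s ≠ 1) :
    DifferentiableAt ℂ (WW x K) s := by
  have hIx : (Complex.I * (x:ℂ)) ≠ 0 := by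
    apply mul_ne_zero Complex.I_ne_zero
    exact_mod_cast ne_of_gt hx
  apply DifferentiableAt.add
  apply DifferentiableAt.add
  apply DifferentiableAt.add
  · exact (differentiable_neg.const_cpow (Or.inl hIx)).differentiableAt
  · exact differentiableAt_riemannZeta h2
  · apply DifferentiableAt.fun_sum
    intro j _
    apply DifferentiableAt.const_mul
    apply DifferentiableAt.sub
    · exact ((cb_diff j).differentiableAt).mul
        ((zt_diff.differentiableAt).comp s (differentiableAt_id.add_const _))
    · apply DifferentiableAt.div_const
      apply DifferentiableAt.fun_finsetProd
      intro i _
      exact (differentiableAt_id.neg).sub_const _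
  · exact GG_diffAt x (le_of_lt hx) K h1



lemma summable_cpow_shift (s : ℂ) (hs : 1 < s.re) :
    Summable (fun n : ℕ => ((n : ℂ) + 1) ^ (-s)) := by
  apply Summable.of_norm
  have h : ∀ n : ℕ, ‖((n : ℂ) + 1) ^ (-s)‖ = ((n : ℝ) + 1) ^ (-s.re) := by
    intro n
    have h1 : ((n : ℂ) + 1) = (((n : ℝ) + 1 : ℝ) : ℂ) := by push_cast; ring
    rw [h1,
      Complex.norm_cpow_eq_rpow_re_of_pos (by positivity), Complex.neg_re]
  simp only [h]
  exact summable_shift s.re hs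

lemma tsum_cpow_shift (s : ℂ) (hs : 1 < s.re) :
    ∑' n : ℕ, ((n : ℂ) + 1) ^ (-s) = riemannZeta s := by
  rw [zeta_eq_tsum_one_div_nat_add_one_cpow hs]
  apply tsum_congr
  intro n
  rw [Complex.cpow_neg, one_div]

lemma hsummand (x : ℝ) (s : ℂ) (K : ℕ) (n : ℕ) :
    ((n : ℂ) + 1 + Complex.I * x) ^ (-s)
      = gg x K s (n + 1) 1
        + ∑ j ∈ Finset.range K, cb s j * (Complex.I * x) ^ j * ((n : ℂ) + 1) ^ (-s - j) := by
  rw [gg_def]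
  push_cast
  simp only [Complex.ofReal_one, one_mul]
  ring

lemma summable_term (x : ℝ) (s : ℂ) (hs : 1 < s.re) (j : ℕ) :
    Summable (fun n : ℕ => cb s j * (Complex.I * x) ^ j * ((n : ℂ) + 1) ^ (-s - j)) := by
  apply Summable.mul_left
  have h : ∀ n : ℕ, ((n : ℂ) + 1) ^ (-s - j) = ((n : ℂ) + 1) ^ (-(s + j)) := by
    intro n; congr 1; ring
  simp only [h]
  apply summable_cpow_shift
  rw [Complex.add_re, Complex.natCast_re]
  have : (0:ℝ) ≤ j := Nat.cast_nonneg j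
  linarith

lemma tsum_term (x : ℝ) (s : ℂ) (hs : 1 < s.re) (j : ℕ) :
    ∑' n : ℕ, cb s j * (Complex.I * x) ^ j * ((n : ℂ) + 1) ^ (-s - j)
      = cb s j * (Complex.I * x) ^ j * riemannZeta (s + j) := by
  rw [tsum_mul_left]
  congr 1
  have h : ∀ n : ℕ, ((n : ℂ) + 1) ^ (-s - j) = ((n : ℂ) + 1) ^ (-(s + j)) := by
    intro n; congr 1; ring
  simp only [h]
  apply tsum_cpow_shift
  rw [Complex.add_re, Complex.natCast_re]
  have : (0:ℝ) ≤ j := Nat.cast_nonneg j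
  linarith

lemma WW_eq_tsum (x : ℝ) (hx : 0 ≤ x) (K : ℕ) (hK : 1 ≤ K) (s : ℂ) (hs : 1 < s.re) :
    (∑' n : ℕ, ((n : ℂ) + Complex.I * x) ^ (-s)) = WW x K s := by
  have hsK : 1 < s.re + K := by
    have : (0:ℝ) ≤ K := Nat.cast_nonneg K
    linarith
  have hgsum := gg_summable x hx K s hsK
  -- summability of the full series
  have hshift : Summable (fun n : ℕ => (((n + 1 : ℕ) : ℂ) + Complex.I * x) ^ (-s)) := by
    have he : ∀ n : ℕ, (((n + 1 : ℕ) : ℂ) + Complex.I * x) ^ (-s)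
        = gg x K s (n + 1) 1 + ∑ j ∈ Finset.range K, cb s j * (Complex.I * x) ^ j * ((n : ℂ) + 1) ^ (-s - j) := by
      intro n
      rw [← hsummand x s K n]
      push_cast
      ring_nf
    have hS2 : Summable (fun n : ℕ => ∑ j ∈ Finset.range K,
        cb s j * (Complex.I * x) ^ j * ((n : ℂ) + 1) ^ (-s - j)) :=
      summable_sum fun j _ => summable_term x s hs j
    exact Summable.congr (hgsum.add hS2) fun n => (he n).symm
  have hsum0 : Summable (fun n : ℕ => ((n : ℂ) + Complex.I * x) ^ (-s)) :=
    (summable_nat_add_iff 1).mp hshift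
  rw [Summable.tsum_eq_zero_add hsum0]
  have h0 : (((0 : ℕ) : ℂ) + Complex.I * x) ^ (-s) = (Complex.I * x) ^ (-s) := by
    norm_num
  rw [h0]
  have h1 : ∑' n : ℕ, (((n + 1 : ℕ) : ℂ) + Complex.I * x) ^ (-s)
      = GG x K s + ∑ j ∈ Finset.range K, cb s j * (Complex.I * x) ^ j * riemannZeta (s + j) := by
    have he : ∀ n : ℕ, (((n + 1 : ℕ) : ℂ) + Complex.I * x) ^ (-s)
        = gg x K s (n + 1) 1 + ∑ j ∈ Finset.range K, cb s j * (Complex.I * x) ^ j * ((n : ℂ) + 1) ^ (-s - j) := by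
      intro n
      rw [← hsummand x s K n]
      push_cast
      ring_nf
    calc ∑' n : ℕ, (((n + 1 : ℕ) : ℂ) + Complex.I * x) ^ (-s)
        = ∑' n : ℕ, (gg x K s (n + 1) 1
            + ∑ j ∈ Finset.range K, cb s j * (Complex.I * x) ^ j * ((n : ℂ) + 1) ^ (-s - j)) :=
          tsum_congr he
      _ = (∑' n : ℕ, gg x K s (n + 1) 1)
            + ∑' n : ℕ, ∑ j ∈ Finset.range K, cb s j * (Complex.I * x) ^ j * ((n : ℂ) + 1) ^ (-s - j) :=
          Summable.tsum_add hgsum (summable_sum fun j _ => summable_term x s hs j)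
      _ = GG x K s + ∑ j ∈ Finset.range K, ∑' n : ℕ, cb s j * (Complex.I * x) ^ j * ((n : ℂ) + 1) ^ (-s - j) := by
          rw [Summable.tsum_finsetSum (fun j _ => summable_term x s hs j)]; rfl
      _ = GG x K s + ∑ j ∈ Finset.range K, cb s j * (Complex.I * x) ^ j * riemannZeta (s + j) := by
          congr 1
          exact Finset.sum_congr rfl fun j _ => tsum_term x s hs j
  rw [h1]
  -- split off the j = 0 term and rewrite via cb_pole
  have h2 : ∑ j ∈ Finset.range K, cb s j * (Complex.I * x) ^ j * riemannZeta (s + j)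
      = riemannZeta s + ∑ j ∈ Finset.Ico 1 K, (Complex.I * x) ^ j *
          (cb s j * zt (s + j) - (∏ i ∈ Finset.range (j - 1), (-s - i)) / (j.factorial : ℂ)) := by
    conv_lhs => rw [Finset.range_eq_Ico]
    rw [Finset.sum_eq_sum_Ico_succ_bot (by omega : 0 < K)]
    congr 1
    · simp [cb_zero]
    · rw [show (0 + 1) = 1 from rfl]
      apply Finset.sum_congr rfl
      intro j hj
      rw [Finset.mem_Ico] at hj
      have hj1 : 1 ≤ j := hj.1
      have hne : s + (j : ℂ) ≠ 1 := by
        intro h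
        have := congrArg Complex.re h
        rw [Complex.add_re, Complex.natCast_re, Complex.one_re] at this
        have hj' : (1:ℝ) ≤ (j:ℝ) := by exact_mod_cast hj1
        linarith
      rw [cb_pole s j hj1 hne]
      ring
  rw [h2]
  unfold WW
  ring



lemma prod_desc (M j : ℕ) (hj : j ≤ M) :
    ∏ i ∈ Finset.range j, ((M : ℂ) - i) = (M.descFactorial j : ℂ) := by
  induction j with
  | zero => simp
  | succ j ih =>
    rw [Finset.prod_range_succ, ih (by omega), Nat.descFactorial_succ]
    have hji : j ≤ M := by omega
    push_cast [Nat.cast_sub hji]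
    ring

lemma cb_neg_nat (M j : ℕ) : cb (-(M : ℂ)) j = (M.choose j : ℂ) := by
  rw [cb_def]
  have hsimp : ∀ i : ℕ, -(-(M : ℂ)) - i = (M : ℂ) - i := fun i => by ring
  simp only [hsimp]
  rcases le_or_gt j M with hj | hj
  · rw [prod_desc M j hj, Nat.descFactorial_eq_factorial_mul_choose]
    have hf : ((j.factorial : ℂ)) ≠ 0 := by exact_mod_cast j.factorial_ne_zero
    push_cast
    rw [mul_comm, mul_div_assoc, div_self hf, mul_one]
  · rw [Finset.prod_eq_zero (Finset.mem_range.mpr hj) (by simp : (M : ℂ) - M = 0),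
      Nat.choose_eq_zero_of_lt hj]
    simp

lemma gg_eval (x : ℝ) (M K n : ℕ) (hK : M + 1 ≤ K) (hn : 1 ≤ n) :
    gg x K (-(M : ℂ)) n 1 = 0 := by
  rw [gg_def]
  have h1 : ((n : ℂ) + (1 : ℝ) * (Complex.I * x)) ^ (-(-(M : ℂ)))
      = ((n : ℂ) + Complex.I * x) ^ M := by
    rw [neg_neg, Complex.ofReal_one, one_mul, Complex.cpow_natCast]
  rw [h1]
  have h2 : ∀ j ∈ Finset.range K, cb (-(M : ℂ)) j * (((1:ℝ) : ℂ) * (Complex.I * x)) ^ j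
        * (n : ℂ) ^ (-(-(M : ℂ)) - j)
      = (M.choose j : ℂ) * (Complex.I * x) ^ j * (n : ℂ) ^ ((M : ℤ) - j) := by
    intro j _
    rw [cb_neg_nat, Complex.ofReal_one, one_mul]
    congr 1
    rw [show -(-(M : ℂ)) - j = (((M : ℤ) - j : ℤ) : ℂ) by push_cast; ring, Complex.cpow_intCast]
  rw [Finset.sum_congr rfl h2]
  have h3 : ∑ j ∈ Finset.range K, (M.choose j : ℂ) * (Complex.I * x) ^ j * (n : ℂ) ^ ((M : ℤ) - j)
      = ∑ j ∈ Finset.range (M + 1), (M.choose j : ℂ) * (Complex.I * x) ^ j * (n : ℂ) ^ ((M : ℤ) - j) := by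
    symm
    apply Finset.sum_subset
    · intro j hj
      rw [Finset.mem_range] at *
      omega
    · intro j _ hj
      rw [Finset.mem_range] at hj
      rw [Nat.choose_eq_zero_of_lt (by omega)]
      simp
  rw [h3]
  have h4 : ∀ j ∈ Finset.range (M + 1),
      (M.choose j : ℂ) * (Complex.I * x) ^ j * (n : ℂ) ^ ((M : ℤ) - j)
        = (Complex.I * x) ^ j * (n : ℂ) ^ (M - j) * (M.choose j : ℂ) := by
    intro j hj
    rw [Finset.mem_range] at hj
    rw [show ((M : ℤ) - j) = ((M - j : ℕ) : ℤ) by omega, zpow_natCast]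
    ring
  rw [Finset.sum_congr rfl h4, ← Commute.add_pow (Commute.all _ _), add_comm]
  ring

lemma GG_eval (x : ℝ) (m : ℕ) : GG x (2 * m + 3) (-((2 * m + 1 : ℕ) : ℂ)) = 0 := by
  unfold GG
  have : ∀ n : ℕ, gg x (2 * m + 3) (-((2 * m + 1 : ℕ) : ℂ)) (n + 1) 1 = 0 := fun n =>
    gg_eval x (2 * m + 1) (2 * m + 3) (n + 1) (by omega) (by omega)
  simp only [this]
  exact tsum_zero

lemma WW_eval (x : ℝ) (m : ℕ) :
    WW x (2 * m + 3) (-((2 * m + 1 : ℕ) : ℂ))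
      = (Complex.I * x) ^ (2 * m + 1)
        + ∑ j ∈ Finset.range (2 * m + 2), (((2 * m + 1).choose j : ℂ)) * (Complex.I * x) ^ j
            * riemannZeta ((j : ℂ) - ((2 * m + 1 : ℕ) : ℂ))
        - (Complex.I * x) ^ (2 * m + 2) * (1 / ((2 * m + 2 : ℕ) : ℂ)) := by
  set M : ℕ := 2 * m + 1 with hM
  set s₀ : ℂ := -((M : ℕ) : ℂ) with hs₀
  unfold WW
  rw [GG_eval x m, add_zero]
  have h1 : (Complex.I * (x:ℂ)) ^ (-s₀) = (Complex.I * x) ^ M := by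
    rw [hs₀, neg_neg, Complex.cpow_natCast]
  rw [h1]
  -- split the top term j = M + 1
  have hsplit : Finset.Ico 1 (2 * m + 3) = Finset.Ico 1 (M + 1 + 1) := by rw [hM]
  rw [hsplit, Finset.sum_Ico_succ_top (by omega)]
  -- top term
  have htop : (Complex.I * (x:ℂ)) ^ (M + 1) *
      (cb s₀ (M + 1) * zt (s₀ + ((M + 1 : ℕ) : ℂ)) - (∏ i ∈ Finset.range (M + 1 - 1), (-s₀ - i)) / (((M + 1).factorial : ℂ)))
      = -((Complex.I * x) ^ (M + 1) * (1 / ((M + 1 : ℕ) : ℂ))) := by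
    have hcb : cb s₀ (M + 1) = 0 := by
      rw [hs₀, cb_neg_nat, Nat.choose_succ_self, Nat.cast_zero]
    have hprod : ∏ i ∈ Finset.range (M + 1 - 1), (-s₀ - i) = ((M.factorial : ℕ) : ℂ) := by
      have : ∀ i : ℕ, -s₀ - i = (M : ℂ) - i := fun i => by rw [hs₀]; ring
      simp only [Nat.add_sub_cancel, this]
      rw [prod_desc M M le_rfl, Nat.descFactorial_self]
    rw [hcb, zero_mul, zero_sub, hprod]
    have hfac : (((M + 1).factorial : ℕ) : ℂ) = ((M + 1 : ℕ) : ℂ) * ((M.factorial : ℕ) : ℂ) := by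
      rw [Nat.factorial_succ]; push_cast; ring
    have hMne : ((M.factorial : ℕ) : ℂ) ≠ 0 := by exact_mod_cast M.factorial_ne_zero
    rw [hfac]
    have hcc : ((M.factorial : ℕ) : ℂ) / (((M + 1 : ℕ) : ℂ) * ((M.factorial : ℕ) : ℂ))
        = 1 / ((M + 1 : ℕ) : ℂ) := by
      rw [mul_comm, ← div_div, div_self hMne]
    rw [mul_neg, hcc]
  rw [htop]
  -- middle terms
  have hmid : ∀ j ∈ Finset.Ico 1 (M + 1),
      (Complex.I * (x:ℂ)) ^ j *
        (cb s₀ j * zt (s₀ + j) - (∏ i ∈ Finset.range (j - 1), (-s₀ - i)) / ((j.factorial : ℂ)))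
      = ((M.choose j : ℂ)) * (Complex.I * x) ^ j * riemannZeta ((j : ℂ) - ((M : ℕ) : ℂ)) := by
    intro j hj
    rw [Finset.mem_Ico] at hj
    have hne : s₀ + (j : ℂ) ≠ 1 := by
      intro h
      have := congrArg Complex.re h
      rw [Complex.add_re, Complex.one_re, hs₀, Complex.neg_re, Complex.natCast_re,
        Complex.natCast_re] at this
      have h1 : (j : ℝ) ≤ M := by exact_mod_cast Nat.le_of_lt_succ hj.2
      have h2 : (0:ℝ) < M := by positivity
      linarith
    rw [cb_pole s₀ j hj.1 hne, hs₀, cb_neg_nat]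
    rw [show -((M:ℕ):ℂ) + (j:ℂ) = (j : ℂ) - ((M : ℕ) : ℂ) by ring]
    ring
  rw [Finset.sum_congr rfl hmid]
  -- absorb zeta s₀ as the j = 0 term
  have hzero : riemannZeta s₀ = ((M.choose 0 : ℂ)) * (Complex.I * x) ^ 0
      * riemannZeta (((0:ℕ) : ℂ) - ((M : ℕ) : ℂ)) := by
    rw [Nat.choose_zero_right]
    simp [hs₀]
  have hfull : riemannZeta s₀ + ∑ j ∈ Finset.Ico 1 (M + 1),
      ((M.choose j : ℂ)) * (Complex.I * x) ^ j * riemannZeta ((j : ℂ) - ((M : ℕ) : ℂ))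
      = ∑ j ∈ Finset.range (M + 1), ((M.choose j : ℂ)) * (Complex.I * x) ^ j
          * riemannZeta ((j : ℂ) - ((M : ℕ) : ℂ)) := by
    conv_rhs => rw [Finset.range_eq_Ico]
    rw [Finset.sum_eq_sum_Ico_succ_bot (by omega : 0 < M + 1)]
    rw [hzero]
  have hfin : (2 * m + 2) = M + 1 := by omega
  rw [show Finset.range (2 * m + 2) = Finset.range (M + 1) from by rw [hfin]]
  rw [show (Complex.I * (x:ℂ)) ^ (2 * m + 2) = (Complex.I * x) ^ (M + 1) from by rw [hfin]]
  rw [show ((2 * m + 2 : ℕ) : ℂ) = ((M + 1 : ℕ) : ℂ) from by rw [hfin]]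
  rw [← hfull]
  ring


lemma Ipow_even (x : ℝ) (k : ℕ) :
    (Complex.I * (x:ℂ)) ^ (2 * k) = ((((-1:ℝ)) ^ k * x ^ (2 * k) : ℝ) : ℂ) := by
  rw [mul_pow, pow_mul, Complex.I_sq]
  push_cast
  ring

lemma Ipow_odd (x : ℝ) (k : ℕ) :
    (Complex.I * (x:ℂ)) ^ (2 * k + 1) = ((((-1:ℝ)) ^ k * x ^ (2 * k + 1) : ℝ) : ℂ) * Complex.I := by
  rw [pow_succ, Ipow_even]
  push_cast
  ring

lemma zeta_val (k : ℕ) : riemannZeta (-(k:ℂ))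
    = ((((-1:ℝ)) ^ k * (bernoulli (k+1) : ℝ) / ((k:ℝ)+1) : ℝ) : ℂ) := by
  rw [riemannZeta_neg_nat_eq_bernoulli]
  push_cast
  ring

lemma re_rrr (a b c : ℝ) : ((a:ℂ) * (b:ℂ) * (c:ℂ)).re = a * b * c := by
  have : ((a:ℂ) * (b:ℂ) * (c:ℂ)) = ((a * b * c : ℝ) : ℂ) := by push_cast; ring
  rw [this, Complex.ofReal_re]

lemma re_rIr (a b c : ℝ) : ((a:ℂ) * ((b:ℂ) * Complex.I) * (c:ℂ)).re = 0 := by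
  have : ((a:ℂ) * ((b:ℂ) * Complex.I) * (c:ℂ)) = ((a * b * c : ℝ) : ℂ) * Complex.I := by
    push_cast; ring
  rw [this]
  simp

lemma sum_range_even_odd {β : Type*} [AddCommMonoid β] (f : ℕ → β) (n : ℕ) :
    ∑ j ∈ Finset.range (2 * n), f j
      = ∑ i ∈ Finset.range n, f (2 * i) + ∑ i ∈ Finset.range n, f (2 * i + 1) := by
  induction n with
  | zero => simp
  | succ n ih =>
    rw [show 2 * (n + 1) = 2 * n + 1 + 1 by omega, Finset.sum_range_succ, Finset.sum_range_succ,
      ih, Finset.sum_range_succ, Finset.sum_range_succ]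
    abel

lemma key_term (x : ℝ) (m j : ℕ) (hj : j ≤ m) :
    ((2*m+1).choose (2*j) : ℝ) * ((-1:ℝ)^j * x^(2*j))
        * ((-1:ℝ)^(2*m+1-2*j) * (bernoulli (2*m+1-2*j+1) : ℝ) / (((2*m+1-2*j : ℕ):ℝ)+1))
      = (Nat.factorial (2*m+1) : ℝ) * ((-1)^(j+1) * (bernoulli (2*(m-j+1)) : ℝ) * x^(2*j)
          / ((Nat.factorial (2*(m-j+1)) : ℝ) * (Nat.factorial (2*j) : ℝ))) := by
  obtain ⟨k, rfl⟩ : ∃ k, m = j + k := ⟨m - j, by omega⟩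
  rw [show 2*(j+k)+1-2*j = 2*k+1 from by omega,
    show (j+k) - j + 1 = k+1 from by omega,
    show 2*k+1+1 = 2*(k+1) from by omega]
  have hch := Nat.choose_mul_factorial_mul_factorial (show 2*j ≤ 2*(j+k)+1 by omega)
  rw [show 2*(j+k)+1-2*j = 2*k+1 from by omega] at hch
  have hcast : ((2*(j+k)+1).choose (2*j) : ℝ) * ((2*j).factorial : ℝ) * ((2*k+1).factorial : ℝ)
      = ((2*(j+k)+1).factorial : ℝ) := by exact_mod_cast congrArg (Nat.cast (R := ℝ)) hch
  have hfac : ((2*(k+1)).factorial : ℝ) = (2*(k:ℝ)+2) * ((2*k+1).factorial : ℝ) := by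
    rw [show 2*(k+1) = (2*k+1)+1 from by omega, Nat.factorial_succ]
    push_cast
    ring
  have hodd : ((-1:ℝ))^(2*k+1) = -1 := Odd.neg_one_pow ⟨k, by ring⟩
  have h1 : ((2*j).factorial : ℝ) ≠ 0 := by positivity
  have h2 : ((2*k+1).factorial : ℝ) ≠ 0 := by positivity
  have h3 : (2*(k:ℝ)+2) ≠ 0 := by positivity
  rw [hodd, hfac]
  push_cast
  rw [← hcast]
  field_simp
  ring

lemma re_eval (x : ℝ) (m : ℕ) :
    ((Complex.I * (x:ℂ)) ^ (2*m+1)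
      + ∑ j ∈ Finset.range (2*m+2), ((2*m+1).choose j : ℂ) * (Complex.I * (x:ℂ)) ^ j
          * riemannZeta ((j:ℂ) - ((2*m+1:ℕ):ℂ))
      - (Complex.I * (x:ℂ)) ^ (2*m+2) * (1 / ((2*m+2:ℕ):ℂ))).re
    = (Nat.factorial (2*m+1) : ℝ) * ∑ j ∈ Finset.range (m+1),
        (-1)^(j+1) * (bernoulli (2*(m-j+1)) : ℝ) * x^(2*j)
          / ((Nat.factorial (2*(m-j+1)) : ℝ) * (Nat.factorial (2*j) : ℝ))
      + (-1)^m * x^(2*m+2) / (2*((m:ℝ)+1)) := by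
  rw [Complex.sub_re, Complex.add_re]
  -- first term: re = 0
  have hT1 : ((Complex.I * (x:ℂ)) ^ (2*m+1)).re = 0 := by
    rw [Ipow_odd, Complex.re_ofReal_mul, Complex.I_re, mul_zero]
  -- last term
  have hT3 : ((Complex.I * (x:ℂ)) ^ (2*m+2) * (1 / ((2*m+2:ℕ):ℂ))).re
      = ((-1:ℝ))^(m+1) * x^(2*m+2) / (2*(m:ℝ)+2) := by
    rw [show 2*m+2 = 2*(m+1) from by omega, Ipow_even]
    have : ((((-1:ℝ)) ^ (m+1) * x ^ (2 * (m+1)) : ℝ) : ℂ) * (1 / ((2*(m+1):ℕ):ℂ))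
        = ((((-1:ℝ)) ^ (m+1) * x ^ (2 * (m+1)) / ((2*(m+1):ℕ):ℝ) : ℝ) : ℂ) := by
      push_cast
      ring
    rw [this, Complex.ofReal_re]
    push_cast
    ring
  -- the sum
  have hS : (∑ j ∈ Finset.range (2*m+2), ((2*m+1).choose j : ℂ) * (Complex.I * (x:ℂ)) ^ j
      * riemannZeta ((j:ℂ) - ((2*m+1:ℕ):ℂ))).re
      = (Nat.factorial (2*m+1) : ℝ) * ∑ j ∈ Finset.range (m+1),
          (-1)^(j+1) * (bernoulli (2*(m-j+1)) : ℝ) * x^(2*j)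
            / ((Nat.factorial (2*(m-j+1)) : ℝ) * (Nat.factorial (2*j) : ℝ)) := by
    rw [Complex.re_sum]
    rw [show 2*m+2 = 2*(m+1) from by omega]
    rw [sum_range_even_odd (fun j => (((2*m+1).choose j : ℂ) * (Complex.I * (x:ℂ)) ^ j
      * riemannZeta ((j:ℂ) - ((2*m+1:ℕ):ℂ))).re) (m+1)]
    have hodd0 : ∀ i ∈ Finset.range (m+1),
        (((2*m+1).choose (2*i+1) : ℂ) * (Complex.I * (x:ℂ)) ^ (2*i+1)
          * riemannZeta (((2*i+1:ℕ):ℂ) - ((2*m+1:ℕ):ℂ))).re = 0 := by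
      intro i hi
      rw [Finset.mem_range] at hi
      have harg : ((2*i+1:ℕ):ℂ) - ((2*m+1:ℕ):ℂ) = -(((2*(m-i)) : ℕ) : ℂ) := by
        obtain ⟨k, rfl⟩ : ∃ k, m = i + k := ⟨m - i, by omega⟩
        rw [show (i+k) - i = k from by omega]
        push_cast
        ring
      rw [harg, zeta_val, Ipow_odd]
      exact re_rIr _ _ _
    have heven : ∀ i ∈ Finset.range (m+1),
        (((2*m+1).choose (2*i) : ℂ) * (Complex.I * (x:ℂ)) ^ (2*i)
          * riemannZeta (((2*i:ℕ):ℂ) - ((2*m+1:ℕ):ℂ))).re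
        = (Nat.factorial (2*m+1) : ℝ) * ((-1)^(i+1) * (bernoulli (2*(m-i+1)) : ℝ) * x^(2*i)
            / ((Nat.factorial (2*(m-i+1)) : ℝ) * (Nat.factorial (2*i) : ℝ))) := by
      intro i hi
      rw [Finset.mem_range] at hi
      have harg : ((2*i:ℕ):ℂ) - ((2*m+1:ℕ):ℂ) = -(((2*m+1-2*i) : ℕ) : ℂ) := by
        obtain ⟨k, rfl⟩ : ∃ k, m = i + k := ⟨m - i, by omega⟩
        rw [show 2*(i+k)+1 - 2*i = 2*k+1 from by omega]
        push_cast
        ring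
      rw [harg, zeta_val, Ipow_even,
        show (((2*m+1).choose (2*i):ℕ) : ℂ) = ((((2*m+1).choose (2*i) : ℕ) : ℝ) : ℂ) from
          (Complex.ofReal_natCast _).symm, re_rrr]
      exact key_term x m i (by omega)
    have hcast1 : ∀ i : ℕ, ((2*i : ℕ) : ℂ) = ((2*i : ℕ) : ℂ) := fun _ => rfl
    calc (∑ i ∈ Finset.range (m+1), (((2*m+1).choose (2*i) : ℂ) * (Complex.I * (x:ℂ)) ^ (2*i)
            * riemannZeta (((2*i:ℕ):ℂ) - ((2*m+1:ℕ):ℂ))).re)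
          + ∑ i ∈ Finset.range (m+1), (((2*m+1).choose (2*i+1) : ℂ) * (Complex.I * (x:ℂ)) ^ (2*i+1)
            * riemannZeta (((2*i+1:ℕ):ℂ) - ((2*m+1:ℕ):ℂ))).re
        = (∑ i ∈ Finset.range (m+1), (Nat.factorial (2*m+1) : ℝ)
            * ((-1)^(i+1) * (bernoulli (2*(m-i+1)) : ℝ) * x^(2*i)
              / ((Nat.factorial (2*(m-i+1)) : ℝ) * (Nat.factorial (2*i) : ℝ)))) + 0 := by
          rw [Finset.sum_congr rfl heven, Finset.sum_eq_zero hodd0]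
      _ = (Nat.factorial (2*m+1) : ℝ) * ∑ j ∈ Finset.range (m+1),
            (-1)^(j+1) * (bernoulli (2*(m-j+1)) : ℝ) * x^(2*j)
              / ((Nat.factorial (2*(m-j+1)) : ℝ) * (Nat.factorial (2*j) : ℝ)) := by
          rw [add_zero, Finset.mul_sum]
  rw [hT1, hT3, hS]
  push_cast
  ring



/-- For `x ∈ (0,1)` and `Z` the analytic continuation of the Hurwitz zeta function
`ζ_H(s, ix)`, the real part of `ζ_H(-2m-1, ix)` is given in terms of Bernoulli numbers. -/
theorem re_hurwitzZeta_neg_odd (x : ℝ) (hx : x ∈ Set.Ioo (0 : ℝ) 1)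
    (Z : ℂ → ℂ) (hZ : DifferentiableOn ℂ Z {(1 : ℂ)}ᶜ)
    (hsum : ∀ s : ℂ, 1 < s.re → Z s = ∑' n : ℕ, ((n : ℂ) + Complex.I * x) ^ (-s)) :
    ∀ m : ℕ, (Z (-(2 * m) - 1)).re =
      (Nat.factorial (2 * m + 1) : ℝ) *
        ∑ j ∈ Finset.range (m + 1),
          (-1) ^ (j + 1) * (bernoulli (2 * (m - j + 1)) : ℝ) * x ^ (2 * j) /
            ((Nat.factorial (2 * (m - j + 1)) : ℝ) * (Nat.factorial (2 * j) : ℝ)) +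
      (-1) ^ m * x ^ (2 * m + 2) / (2 * (m + 1)) := by
  intro m
  obtain ⟨hx0, hx1⟩ := hx
  set K : ℕ := 2 * m + 3 with hK
  set s₀ : ℂ := -((2 * m + 1 : ℕ) : ℂ) with hs₀d
  have hZarg : (-(2 * (m:ℂ)) - 1) = s₀ := by rw [hs₀d]; push_cast; ring
  have hKcast : (3:ℝ) ≤ (K:ℝ) := by
    rw [hK]; push_cast; linarith [Nat.cast_nonneg (α := ℝ) m]
  set A : Set ℂ := {c : ℂ | 1 - (K:ℝ) < c.re} ∩ {c : ℂ | 0 < c.im} with hA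
  set B : Set ℂ := {c : ℂ | 1 - (K:ℝ) < c.re} ∩ {c : ℂ | c.re < 1} with hB
  have hAopen : IsOpen A :=
    (isOpen_lt continuous_const Complex.continuous_re).inter
      (isOpen_lt continuous_const Complex.continuous_im)
  have hBopen : IsOpen B :=
    (isOpen_lt continuous_const Complex.continuous_re).inter
      (isOpen_lt Complex.continuous_re continuous_const)
  have hAsub : A ⊆ {(1:ℂ)}ᶜ := by
    intro s hs
    simp only [Set.mem_compl_iff, Set.mem_singleton_iff]
    intro h
    rw [h] at hs
    have := hs.2
    simp at this
  have hBsub : B ⊆ {(1:ℂ)}ᶜ := by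
    intro s hs
    simp only [Set.mem_compl_iff, Set.mem_singleton_iff]
    intro h
    rw [h] at hs
    have := hs.2
    simp at this
  have hZA : AnalyticOnNhd ℂ Z A :=
    (hZ.analyticOnNhd isOpen_compl_singleton).mono hAsub
  have hZB : AnalyticOnNhd ℂ Z B :=
    (hZ.analyticOnNhd isOpen_compl_singleton).mono hBsub
  have hWA : AnalyticOnNhd ℂ (WW x K) A := by
    apply DifferentiableOn.analyticOnNhd _ hAopen
    intro s hs
    exact (WW_diffAt x hx0 K hs.1 (fun h => by rw [h] at hs; simpa using hs.2)).differentiableWithinAt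
  have hWB : AnalyticOnNhd ℂ (WW x K) B := by
    apply DifferentiableOn.analyticOnNhd _ hBopen
    intro s hs
    refine (WW_diffAt x hx0 K hs.1 (fun h => ?_)).differentiableWithinAt
    rw [h] at hs
    have := hs.2
    simp at this
  have hpreA : IsPreconnected A :=
    ((convex_halfSpace_re_gt (1 - (K:ℝ))).inter (convex_halfSpace_im_gt 0)).isPreconnected
  have hpreB : IsPreconnected B :=
    ((convex_halfSpace_re_gt (1 - (K:ℝ))).inter (convex_halfSpace_re_lt 1)).isPreconnected
  have hz₀A : (2 + Complex.I) ∈ A := by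
    constructor
    · show 1 - (K:ℝ) < (2 + Complex.I).re
      simp
      linarith
    · show (0:ℝ) < (2 + Complex.I).im
      simp
  have hev : Z =ᶠ[nhds (2 + Complex.I)] WW x K := by
    have hopen : IsOpen {s : ℂ | 1 < s.re} := isOpen_lt continuous_const Complex.continuous_re
    filter_upwards [hopen.mem_nhds (show (1:ℝ) < (2 + Complex.I).re by simp)] with s hs
    rw [hsum s hs]
    exact WW_eq_tsum x (le_of_lt hx0) K (by omega) s hs
  have hEqA : Set.EqOn Z (WW x K) A :=
    hZA.eqOn_of_preconnected_of_eventuallyEq hWA hpreA hz₀A hev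
  have hz₁A : Complex.I ∈ A := by
    constructor
    · show 1 - (K:ℝ) < Complex.I.re
      simp
      linarith
    · show (0:ℝ) < Complex.I.im
      simp
  have hz₁B : Complex.I ∈ B := by
    constructor
    · show 1 - (K:ℝ) < Complex.I.re
      simp
      linarith
    · show Complex.I.re < 1
      simp
  have hev2 : Z =ᶠ[nhds Complex.I] WW x K :=
    Filter.eventuallyEq_of_mem (hAopen.mem_nhds hz₁A) hEqA
  have hEqB : Set.EqOn Z (WW x K) B :=
    hZB.eqOn_of_preconnected_of_eventuallyEq hWB hpreB hz₁B hev2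
  have hs₀B : s₀ ∈ B := by
    constructor
    · show 1 - (K:ℝ) < s₀.re
      rw [hs₀d]
      simp only [Complex.neg_re, Complex.natCast_re]
      rw [hK]
      push_cast
      linarith
    · show s₀.re < 1
      rw [hs₀d]
      simp only [Complex.neg_re, Complex.natCast_re]
      push_cast
      linarith [Nat.cast_nonneg (α := ℝ) m]
  have hval : Z s₀ = WW x K s₀ := hEqB hs₀B
  rw [hZarg, hval, hK, hs₀d, WW_eval x m]
  exact re_eval x m

end HurwitzAux
end

section
/- Let x ∈ (0,1) and let m ∈ ℕ with m ≥ 1. Then the imaginary part of ∑_{n=0}^∞ (n + i x)^{-2m} equals (-1)^{m+1} ( (2π)^{2m} / (π (2m-1)!) ) · ∑_{k=0}^∞ ζ'_R(−2(m+k)) (2π x)^{2k+1} / (2k+1)!. -/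
open Complex Real



lemma zderiv (n : ℕ) (hn : 1 ≤ n) :
    deriv riemannZeta (-(2*(n:ℂ))) =
      ((-1:ℂ)^n * π * (Nat.factorial (2*n)) / (2*π)^(2*n+1)) * riemannZeta (2*(n:ℂ)+1) := by
  set s0 : ℂ := 2*(n:ℂ)+1 with hs0
  have hs0' : s0 = ((2*n+1 : ℕ) : ℂ) := by rw [hs0]; push_cast; ring
  have hre : s0.re = (2*n+1 : ℕ) := by rw [hs0', Complex.natCast_re]
  have hre1 : 1 < s0.re := by
    rw [hre]
    have : 3 ≤ 2*n+1 := by omega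
    calc (1:ℝ) < 3 := by norm_num
      _ ≤ (2*n+1 : ℕ) := by exact_mod_cast this
  have hs1 : s0 ≠ 1 := by intro h; rw [h] at hre1; simp at hre1
  -- derivative of LHS composite
  have h1s : (1:ℂ) - s0 = -(2*(n:ℂ)) := by rw [hs0]; ring
  have hζd : DifferentiableAt ℂ riemannZeta (1 - s0) := by
    apply differentiableAt_riemannZeta
    rw [h1s]
    intro h
    have := congrArg Complex.re h
    simp at this
    have h0 : (0:ℝ) ≤ (n:ℝ) := by positivity
    linarith
  have hF : HasDerivAt (fun s => riemannZeta (1 - s)) (deriv riemannZeta (1 - s0) * (-1)) s0 :=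
    HasDerivAt.comp s0 hζd.hasDerivAt ((hasDerivAt_id s0).const_sub 1)
  -- derivative of RHS
  have hpow : HasDerivAt (fun s : ℂ => (2*(π:ℂ))^(-s))
      ((2*(π:ℂ))^(-s0) * Complex.log (2*π) * (-1)) s0 := by
    exact HasDerivAt.const_cpow (hasDerivAt_neg s0) (Or.inl (by
      simp [Complex.ofReal_ne_zero, Real.pi_ne_zero]))
  have hΓ : HasDerivAt Complex.Gamma (deriv Complex.Gamma s0) s0 := by
    refine (Complex.differentiableAt_Gamma s0 fun m => ?_).hasDerivAt
    intro h
    have : s0.re = -(m:ℝ) := by rw [h]; simp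
    rw [hre] at this
    have h0 : (0:ℝ) ≤ (m:ℝ) := by positivity
    have h1 : (0:ℝ) ≤ (n:ℝ) := by positivity
    linarith
  have hcos : HasDerivAt (fun s : ℂ => Complex.cos ((π:ℂ)*s/2))
      (-Complex.sin ((π:ℂ)*s0/2) * ((π:ℂ)/2)) s0 := by
    have h1 : HasDerivAt (fun s : ℂ => (π:ℂ)*s/2) ((π:ℂ)/2) s0 := by
      simpa using (((hasDerivAt_id s0).const_mul (π:ℂ)).div_const 2)
    exact (Complex.hasDerivAt_cos _).comp s0 h1
  have hζ : HasDerivAt riemannZeta (deriv riemannZeta s0) s0 :=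
    (differentiableAt_riemannZeta hs1).hasDerivAt
  have hG := (((hpow.const_mul 2).mul hΓ).mul hcos).mul hζ
  -- functional equation eventually
  have hev : (fun s => riemannZeta (1 - s)) =ᶠ[nhds s0]
      (fun s => 2 * (2*(π:ℂ))^(-s) * Complex.Gamma s * Complex.cos ((π:ℂ)*s/2) * riemannZeta s) := by
    have hopen : {s : ℂ | 1 < s.re} ∈ nhds s0 :=
      (isOpen_lt continuous_const Complex.continuous_re).mem_nhds hre1
    filter_upwards [hopen] with s hs
    refine riemannZeta_one_sub (fun m => ?_) (fun h => ?_)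
    · intro h
      have : s.re = -(m:ℝ) := by rw [h]; simp
      simp only [Set.mem_setOf_eq, this] at hs
      have : (0:ℝ) ≤ (m:ℝ) := by positivity
      linarith
    · rw [h] at hs; simp at hs
  have hF2 := hG.congr_of_eventuallyEq hev
  have huniq := hF.unique hF2
  -- now compute
  have hcos0 : Complex.cos ((π:ℂ)*s0/2) = 0 := by
    have harg : (π:ℂ)*s0/2 = ((π * (2*n+1)/2 : ℝ) : ℂ) := by rw [hs0]; push_cast; ring
    rw [harg, ← Complex.ofReal_cos]
    have : Real.cos (π * (2*n+1)/2) = 0 := by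
      have h2 : π * (2*(n:ℝ)+1)/2 = n*π + π/2 := by ring
      rw [h2, Real.cos_add, Real.cos_pi_div_two, Real.sin_nat_mul_pi]; ring
    rw [this, Complex.ofReal_zero]
  have hsin : Complex.sin ((π:ℂ)*s0/2) = (-1:ℂ)^n := by
    have harg : (π:ℂ)*s0/2 = ((π * (2*n+1)/2 : ℝ) : ℂ) := by rw [hs0]; push_cast; ring
    rw [harg, ← Complex.ofReal_sin]
    have : Real.sin (π * (2*n+1)/2) = (-1:ℝ)^n := by
      have h2 : π * (2*(n:ℝ)+1)/2 = n*π + π/2 := by ring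
      rw [h2, Real.sin_add, Real.cos_pi_div_two, Real.sin_nat_mul_pi, Real.sin_pi_div_two]
      have := Real.cos_nat_mul_pi_sub 0 n
      simp at this
      simp [this]
    rw [this]; push_cast; ring
  have hΓval : Complex.Gamma s0 = (Nat.factorial (2*n) : ℂ) := by
    have : s0 = ((2*n : ℕ) : ℂ) + 1 := by rw [hs0]; push_cast; ring
    rw [this, Complex.Gamma_nat_eq_factorial]
  have hpowval : (2*(π:ℂ))^(-s0) = ((2*(π:ℂ))^(2*n+1))⁻¹ := by
    have : s0 = ((2*n+1 : ℕ) : ℂ) := by rw [hs0]; push_cast; ring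
    rw [this, Complex.cpow_neg, Complex.cpow_natCast]
  simp only [Pi.mul_apply] at huniq
  rw [h1s, hcos0, hsin, hΓval, hpowval] at huniq
  have hne : ((2*(π:ℂ))^(2*n+1)) ≠ 0 := by
    apply pow_ne_zero
    simp [Complex.ofReal_ne_zero, Real.pi_ne_zero]
  field_simp at huniq
  rw [div_mul_eq_mul_div, eq_div_iff hne]
  linear_combination -huniq
lemma aux_zeta_odd (n : ℕ) (hn : 1 ≤ n) :
    riemannZeta (2*(n:ℂ)+1) = ((∑' j:ℕ, 1/((j:ℝ)+1)^(2*n+1) : ℝ) : ℂ) := by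
  have hre1 : 1 < (2*(n:ℂ)+1).re := by
    have h1 : (2*(n:ℂ)+1) = ((2*n+1 : ℕ) : ℂ) := by push_cast; ring
    rw [h1, Complex.natCast_re]
    have : 3 ≤ 2*n+1 := by omega
    calc (1:ℝ) < 3 := by norm_num
      _ ≤ (2*n+1 : ℕ) := by exact_mod_cast this
  rw [zeta_eq_tsum_one_div_nat_add_one_cpow hre1, Complex.ofReal_tsum]
  refine tsum_congr fun j => ?_
  rw [show (2*(n:ℂ)+1) = ((2*n+1 : ℕ) : ℂ) by push_cast; ring, Complex.cpow_natCast]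
  push_cast
  ring

lemma aux_zderiv_re (n : ℕ) (hn : 1 ≤ n) :
    (deriv riemannZeta (-(2*(n:ℂ)))).re =
      (-1:ℝ)^n * π * (Nat.factorial (2*n)) / (2*π)^(2*n+1) *
        (∑' j:ℕ, 1/((j:ℝ)+1)^(2*n+1)) := by
  have h := zderiv n hn
  rw [aux_zeta_odd n hn] at h
  have hc : ((-1:ℂ)^n * (π:ℂ) * (Nat.factorial (2*n)) / (2*(π:ℂ))^(2*n+1)) =
      (((-1:ℝ)^n * π * (Nat.factorial (2*n)) / (2*π)^(2*n+1) : ℝ) : ℂ) := by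
    push_cast; ring
  rw [hc, ← Complex.ofReal_mul] at h
  rw [h, Complex.ofReal_re]
section
open Complex Real

-- the real coefficient
noncomputable def fco (x : ℝ) (m n k : ℕ) : ℝ :=
  (-1:ℝ)^(k+1) * (Nat.choose (2*m+2*k) (2*k+1)) * x^(2*k+1) * (1/((n:ℝ)+1)^(2*m+2*k+1))

lemma aux_expand (x : ℝ) (hx0 : 0 < x) (hx1 : x < 1) (m : ℕ) (hm : 1 ≤ m) (n : ℕ) :
    HasSum (fun k : ℕ => fco x m n k)
      (((((n:ℂ) + 1) + Complex.I*(x:ℝ))^(2*m))⁻¹).im := by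
  have hN0 : (0:ℝ) < (n:ℝ)+1 := by positivity
  set N : ℂ := ((((n:ℝ)+1 : ℝ)) : ℂ) with hNdef
  have hNC : ((n:ℂ) + 1) = N := by rw [hNdef]; push_cast; ring
  have hNne : N ≠ 0 := by
    rw [hNdef]; exact_mod_cast ne_of_gt hN0
  set q : ℝ := x/((n:ℝ)+1) with hqdef
  have hq0 : 0 < q := by rw [hqdef]; exact div_pos hx0 hN0
  have hq1 : q < 1 := by
    rw [hqdef, div_lt_one hN0]
    have h0 : (0:ℝ) ≤ (n:ℝ) := Nat.cast_nonneg n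
    linarith
  set r : ℂ := -(Complex.I*(x:ℝ))/N with hrdef
  have hrq : r = (-Complex.I) * ((q : ℝ) : ℂ) := by
    rw [hrdef, hqdef, hNdef, Complex.ofReal_div]
    push_cast
    ring
  have hr : ‖r‖ < 1 := by
    rw [hrq]
    rw [norm_mul, norm_neg, Complex.norm_I, one_mul, Complex.norm_real, Real.norm_eq_abs,
      abs_of_pos hq0]
    exact hq1
  set z : ℂ := N + Complex.I*(x:ℝ) with hzdef
  have hzne : z ≠ 0 := by
    intro h
    have := congrArg Complex.im h
    rw [hzdef, hNdef] at this
    simp at this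
    linarith
  have h1r : (1 - r) = z / N := by
    rw [hrdef, hzdef]
    field_simp
    ring
  have h1rne : (1 - r) ≠ 0 := by
    rw [h1r]
    exact div_ne_zero hzne hNne
  have hbin := hasSum_choose_mul_geometric_of_norm_lt_one (𝕜 := ℂ) (2*m-1) hr
  rw [show 2*m-1+1 = 2*m by omega] at hbin
  have hbin2 := hbin.div_const (N^(2*m))
  have htar : (1/(1-r)^(2*m)) / N^(2*m) = (z^(2*m))⁻¹ := by
    rw [h1r, div_pow]
    field_simp
  rw [htar] at hbin2
  have hIm := Complex.imCLM.hasSum hbin2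
  simp only [Complex.imCLM_apply] at hIm
  -- t j = ↑C_j * r^j / N^(2m)
  have him : ∀ j : ℕ, ((((j + (2*m-1)).choose (2*m-1) : ℂ)) * r ^ j / N^(2*m)).im =
      (((-Complex.I)^j).im) * (((j + (2*m-1)).choose (2*m-1) : ℝ) * q^j / ((n:ℝ)+1)^(2*m)) := by
    intro j
    have : (((j + (2*m-1)).choose (2*m-1) : ℂ)) * r ^ j / N^(2*m) =
        ((-Complex.I)^j) * ((((j + (2*m-1)).choose (2*m-1) : ℝ) * q^j / ((n:ℝ)+1)^(2*m) : ℝ) : ℂ) := by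
      rw [hrq, mul_pow, hNdef]
      push_cast
      ring
    rw [this, Complex.mul_im, Complex.ofReal_im, Complex.ofReal_re, mul_zero, zero_add]
  have hvanish : ∀ j ∉ Set.range (fun k : ℕ => 2*k+1),
      ((((j + (2*m-1)).choose (2*m-1) : ℂ)) * r ^ j / N^(2*m)).im = 0 := by
    intro j hj
    have hjeven : ∃ k, j = 2*k := by
      rcases Nat.even_or_odd j with ⟨k, hk⟩ | ⟨k, hk⟩
      · exact ⟨k, by omega⟩
      · exact absurd ⟨k, show 2*k+1 = j by omega⟩ hj
    obtain ⟨k, rfl⟩ := hjeven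
    rw [him]
    have : ((-Complex.I)^(2*k)).im = 0 := by
      rw [pow_mul]
      have : (-Complex.I)^2 = -1 := by
        rw [neg_pow, Complex.I_sq]; norm_num
      rw [this]
      have : ((-1:ℂ))^k = (((-1:ℝ)^k : ℝ) : ℂ) := by rw [Complex.ofReal_pow]; norm_num
      rw [this, Complex.ofReal_im]
    rw [this, zero_mul]
  have hinj : Function.Injective (fun k : ℕ => 2*k+1) := by
    intro a b h
    simpa using h
  have hodd := (hinj.hasSum_iff hvanish).mpr hIm
  have hfe : (fun k => fco x m n k) =
      (fun j => ((((j + (2*m-1)).choose (2*m-1) : ℂ)) * r ^ j / N^(2*m)).im) ∘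
        (fun k : ℕ => 2*k+1) := by
    funext k
    simp only [Function.comp_apply]
    rw [him]
    have hI : ((-Complex.I)^(2*k+1)).im = -(-1:ℝ)^k := by
      have h2 : (-Complex.I)^2 = -1 := by rw [neg_pow, Complex.I_sq]; norm_num
      have hk : ((-1:ℂ))^k = (((-1:ℝ)^k : ℝ) : ℂ) := by rw [Complex.ofReal_pow]; norm_num
      rw [pow_succ, pow_mul, h2, hk, Complex.mul_im, Complex.ofReal_re, Complex.ofReal_im]
      simp
    rw [hI]
    have hch : (2*k+1 + (2*m-1)).choose (2*m-1) = (2*m+2*k).choose (2*k+1) := by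
      have h1 : 2*k+1 + (2*m-1) = 2*m+2*k := by omega
      rw [h1]
      have h2 : 2*m-1 = (2*m+2*k) - (2*k+1) := by omega
      rw [h2, Nat.choose_symm (by omega)]
    rw [hch]
    rw [fco]
    have hq : q^(2*k+1) = x^(2*k+1) / ((n:ℝ)+1)^(2*k+1) := by
      rw [hqdef, div_pow]
    rw [hq]
    have : ((n:ℝ)+1)^(2*m+2*k+1) = ((n:ℝ)+1)^(2*m) * ((n:ℝ)+1)^(2*k+1) := by
      ring
    rw [this]
    have hne1 : ((n:ℝ)+1)^(2*m) ≠ 0 := by positivity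
    have hne2 : ((n:ℝ)+1)^(2*k+1) ≠ 0 := by positivity
    field_simp
    ring
  rw [hfe, hNC]
  exact hodd

end
section
open Complex Real

lemma aux_p (p : ℕ) (hp : 1 < p) : Summable (fun n:ℕ => 1/((n:ℝ)+1)^p) := by
  have h1 := Real.summable_one_div_nat_pow.mpr hp
  have h2 := (summable_nat_add_iff 1).mpr h1
  refine h2.congr fun n => ?_
  push_cast
  ring

lemma aux_abs_fco (x : ℝ) (hx0 : 0 < x) (m n k : ℕ) (hm : 1 ≤ m) :
    |fco x m n k| = ((2*k+1 + (2*m-1)).choose (2*m-1) : ℝ) * (x/((n:ℝ)+1))^(2*k+1)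
      / ((n:ℝ)+1)^(2*m) := by
  have hN0 : (0:ℝ) < (n:ℝ)+1 := by positivity
  have hch : (2*k+1 + (2*m-1)).choose (2*m-1) = (2*m+2*k).choose (2*k+1) := by
    have h1 : 2*k+1 + (2*m-1) = 2*m+2*k := by omega
    rw [h1]
    have h2 : 2*m-1 = (2*m+2*k) - (2*k+1) := by omega
    rw [h2, Nat.choose_symm (by omega)]
  rw [hch, fco, abs_mul, abs_mul, abs_mul]
  rw [_root_.abs_pow, abs_neg, abs_one, one_pow, one_mul]
  rw [Nat.abs_cast, _root_.abs_pow, _root_.abs_of_pos hx0,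
    _root_.abs_of_pos (by positivity : (0:ℝ) < 1/((n:ℝ)+1)^(2*m+2*k+1))]
  rw [div_pow]
  have h3 : ((n:ℝ)+1)^(2*m+2*k+1) = ((n:ℝ)+1)^(2*m) * ((n:ℝ)+1)^(2*k+1) := by ring
  rw [h3]
  have hne1 : ((n:ℝ)+1)^(2*m) ≠ 0 := by positivity
  have hne2 : ((n:ℝ)+1)^(2*k+1) ≠ 0 := by positivity
  field_simp

lemma aux_row (x : ℝ) (hx0 : 0 < x) (hx1 : x < 1) (m : ℕ) (hm : 1 ≤ m) (n : ℕ) :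
    Summable (fun k => |fco x m n k|) ∧
    ∑' k, |fco x m n k| ≤ (1/(1-x)^(2*m)) * (1/((n:ℝ)+1)^2) := by
  have hN0 : (0:ℝ) < (n:ℝ)+1 := by positivity
  have hN1 : (1:ℝ) ≤ (n:ℝ)+1 := by
    have h0 : (0:ℝ) ≤ (n:ℝ) := Nat.cast_nonneg n
    linarith
  set q : ℝ := x/((n:ℝ)+1) with hqdef
  have hq0 : 0 < q := by rw [hqdef]; exact div_pos hx0 hN0
  have hq1 : q < 1 := by
    rw [hqdef, div_lt_one hN0]
    linarith
  have hqn : ‖q‖ < 1 := by rw [Real.norm_eq_abs, abs_of_pos hq0]; exact hq1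
  have hbin := hasSum_choose_mul_geometric_of_norm_lt_one (𝕜 := ℝ) (2*m-1) hqn
  rw [show 2*m-1+1 = 2*m by omega] at hbin
  have hu := hbin.div_const (((n:ℝ)+1)^(2*m))
  -- u j := C_j * q^j / (n+1)^(2m)
  have habs : ∀ k, |fco x m n k| =
      (fun j => ((j + (2*m-1)).choose (2*m-1) : ℝ) * q^j / ((n:ℝ)+1)^(2*m)) (2*k+1) := by
    intro k
    rw [aux_abs_fco x hx0 m n k hm]
  have hinj : Function.Injective (fun k : ℕ => 2*k+1) := fun a b h => by simpa using h
  have hsrow : Summable (fun k => |fco x m n k|) := by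
    refine (hu.summable.comp_injective hinj).congr fun k => (habs k).symm
  refine ⟨hsrow, ?_⟩
  have hle : ∑' k, |fco x m n k| ≤
      ∑' j, ((j + (2*m-1)).choose (2*m-1) : ℝ) * q^j / ((n:ℝ)+1)^(2*m) := by
    refine Summable.tsum_le_tsum_of_inj (fun k : ℕ => 2*k+1) hinj (fun j _ => by positivity)
      (fun k => le_of_eq (habs k)) hsrow hu.summable
  refine hle.trans ?_
  rw [hu.tsum_eq]
  have h1q : (0:ℝ) < 1 - q := by linarith
  have h1x : (0:ℝ) < 1 - x := by linarith
  have hkey : (1-x)^(2*m) * ((n:ℝ)+1)^2 ≤ (1-q)^(2*m) * ((n:ℝ)+1)^(2*m) := by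
    have he1 : (1-q) * ((n:ℝ)+1) = (n:ℝ)+1-x := by
      rw [hqdef]; field_simp
    have he2 : (1-x) * ((n:ℝ)+1) ≤ (n:ℝ)+1-x := by
      have : x ≤ x * ((n:ℝ)+1) := le_mul_of_one_le_right (le_of_lt hx0) hN1
      nlinarith
    calc (1-x)^(2*m) * ((n:ℝ)+1)^2 ≤ (1-x)^(2*m) * ((n:ℝ)+1)^(2*m) := by
          refine mul_le_mul_of_nonneg_left ?_ (by positivity)
          exact pow_le_pow_right₀ hN1 (by omega)
      _ = ((1-x) * ((n:ℝ)+1))^(2*m) := by rw [mul_pow]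
      _ ≤ ((n:ℝ)+1-x)^(2*m) := by
          refine pow_le_pow_left₀ (by positivity) he2 _
      _ = ((1-q) * ((n:ℝ)+1))^(2*m) := by rw [he1]
      _ = (1-q)^(2*m) * ((n:ℝ)+1)^(2*m) := by rw [mul_pow]
  have hpos1 : (0:ℝ) < (1-x)^(2*m) * ((n:ℝ)+1)^2 := by positivity
  have := one_div_le_one_div_of_le hpos1 hkey
  calc 1/(1-q)^(2*m) / ((n:ℝ)+1)^(2*m) = 1/((1-q)^(2*m) * ((n:ℝ)+1)^(2*m)) := by
        rw [div_div]
    _ ≤ 1/((1-x)^(2*m) * ((n:ℝ)+1)^2) := this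
    _ = (1/(1-x)^(2*m)) * (1/((n:ℝ)+1)^2) := (one_div_mul_one_div _ _).symm

set_option maxHeartbeats 1000000 in
lemma aux_fubini (x : ℝ) (hx0 : 0 < x) (hx1 : x < 1) (m : ℕ) (hm : 1 ≤ m) :
    ∑' n : ℕ, ∑' k : ℕ, fco x m n k = ∑' k : ℕ, ∑' n : ℕ, fco x m n k := by
  have habs : Summable (fun p : ℕ × ℕ => |fco x m p.1 p.2|) := by
    refine (summable_prod_of_nonneg (fun p => abs_nonneg _)).mpr
      ⟨fun n => (aux_row x hx0 hx1 m hm n).1, ?_⟩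
    refine Summable.of_nonneg_of_le (fun n => tsum_nonneg fun k => abs_nonneg _)
      (fun n => (aux_row x hx0 hx1 m hm n).2) ?_
    exact Summable.mul_left (1/(1-x)^(2*m)) (aux_p 2 one_lt_two)
  have hF : Summable (Function.uncurry fun (n k : ℕ) => fco x m n k) := by
    have := habs.of_abs
    exact this
  have hrows : ∀ n, Summable (fun k => fco x m n k) :=
    fun n => (aux_row x hx0 hx1 m hm n).1.of_abs
  have hcols : ∀ k, Summable (fun n => fco x m n k) := by
    intro k
    have hp : Summable (fun n:ℕ => 1/((n:ℝ)+1)^(2*m+2*k+1)) := aux_p _ (by omega)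
    have he : (fun n:ℕ => fco x m n k) = fun n : ℕ =>
        ((-1:ℝ)^(k+1) * ((2*m+2*k).choose (2*k+1) : ℝ) * x^(2*k+1)) * (1/((n:ℝ)+1)^(2*m+2*k+1)) := by
      funext n; rw [fco]
    rw [he]
    exact hp.mul_left _
  exact (Summable.tsum_comm' hF hrows hcols).symm

end

/-- For `x ∈ (0,1)` and `m ≥ 1`, the imaginary part of `ζ_H(2m, ix) = ∑_{n≥0} (n+ix)^{-2m}`
is given by a series involving the values `ζ'_R(-2(m+k))` of the derivative of the
Riemann zeta function at negative even integers. -/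
theorem im_hurwitzZeta_pos_even (x : ℝ) (hx : x ∈ Set.Ioo (0 : ℝ) 1) (m : ℕ) (hm : 1 ≤ m) :
    (∑' n : ℕ, ((n : ℂ) + Complex.I * x) ^ (-(2 * (m : ℂ)))).im =
      (-1) ^ (m + 1) * ((2 * π) ^ (2 * m) / (π * (Nat.factorial (2 * m - 1) : ℝ))) *
        ∑' k : ℕ, (deriv riemannZeta (-(2 * ((m : ℂ) + (k : ℂ))))).re *
          (2 * π * x) ^ (2 * k + 1) / (Nat.factorial (2 * k + 1) : ℝ) := by
  obtain ⟨hx0, hx1⟩ := hx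
  have hterm : ∀ n : ℕ, ((n:ℂ) + Complex.I*(x:ℝ))^(-(2*(m:ℂ))) =
      (((n:ℂ)+Complex.I*x)^(2*m))⁻¹ := by
    intro n
    have hz : (n:ℂ) + Complex.I*(x:ℝ) ≠ 0 := by
      intro h
      have := congrArg Complex.im h
      simp at this
      linarith
    rw [show -(2*(m:ℂ)) = -((2*m : ℕ):ℂ) by push_cast; ring, Complex.cpow_neg,
      Complex.cpow_natCast]
  rw [tsum_congr hterm]
  -- summability
  have hnorm : ∀ n:ℕ, ‖(((((n:ℕ)+1 : ℕ):ℂ)+Complex.I*(x:ℝ))^(2*m))⁻¹‖ ≤ 1/((n:ℝ)+1)^2 := by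
    intro n
    have h1 : ((n:ℝ)+1) ≤ ‖((((n:ℕ)+1 : ℕ):ℂ)+Complex.I*(x:ℝ))‖ := by
      have h2 := Complex.abs_re_le_norm ((((n:ℕ)+1 : ℕ):ℂ)+Complex.I*(x:ℝ))
      have h3 : ((((n:ℕ)+1 : ℕ):ℂ)+Complex.I*(x:ℝ)).re = (n:ℝ)+1 := by
        simp
      rw [h3] at h2
      refine le_trans (le_abs_self _) h2
    rw [norm_inv, norm_pow]
    have hN1 : (1:ℝ) ≤ (n:ℝ)+1 := by
      have h0 : (0:ℝ) ≤ (n:ℝ) := Nat.cast_nonneg n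
      linarith
    have h4 : ((n:ℝ)+1)^2 ≤ (‖((((n:ℕ)+1 : ℕ):ℂ)+Complex.I*(x:ℝ))‖)^(2*m) := by
      calc ((n:ℝ)+1)^2 ≤ ((n:ℝ)+1)^(2*m) := pow_le_pow_right₀ hN1 (by omega)
        _ ≤ _ := pow_le_pow_left₀ (by positivity) h1 _
    rw [one_div]
    exact inv_anti₀ (by positivity) h4
  have hgs : Summable (fun n:ℕ => (((n:ℂ)+Complex.I*(x:ℝ))^(2*m))⁻¹) := by
    rw [← summable_nat_add_iff 1]
    refine Summable.of_norm_bounded (aux_p 2 one_lt_two) ?_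
    intro n
    exact_mod_cast hnorm n
  rw [Complex.im_tsum hgs]
  have himsum : Summable (fun n:ℕ => ((((n:ℂ)+Complex.I*(x:ℝ))^(2*m))⁻¹).im) :=
    (Complex.hasSum_im hgs.hasSum).summable
  rw [Summable.tsum_eq_zero_add himsum]
  have h00 : (((((0:ℕ):ℂ))+Complex.I*(x:ℝ))^(2*m))⁻¹.im = 0 := by
    rw [Nat.cast_zero, zero_add]
    have h1 : (Complex.I*(x:ℝ))^(2*m) = (((-(x^2) : ℝ)):ℂ)^m := by
      rw [pow_mul]
      congr 1
      rw [mul_pow, Complex.I_sq]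
      push_cast
      ring
    rw [h1, ← Complex.ofReal_pow, ← Complex.ofReal_inv, Complex.ofReal_im]
  rw [h00, zero_add]
  have hexp : ∀ n:ℕ, (((((n:ℕ)+1 : ℕ):ℂ)+Complex.I*(x:ℝ))^(2*m))⁻¹.im
      = ∑' k, fco x m n k := by
    intro n
    have hcast : ((n+1 : ℕ):ℂ) = (n:ℂ)+1 := by push_cast; ring
    rw [hcast, ← (aux_expand x hx0 hx1 m hm n).tsum_eq]
  have hexp' : ∀ n:ℕ, ((((n:ℂ)+1)+Complex.I*(x:ℝ))^(2*m))⁻¹.im = ∑' k, fco x m n k := by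
    intro n
    rw [← hexp n]
    norm_num
  calc ∑' n:ℕ, (((((n:ℕ)+1 : ℕ):ℂ)+Complex.I*(x:ℝ))^(2*m))⁻¹.im
      = ∑' n:ℕ, ∑' k:ℕ, fco x m n k := tsum_congr hexp
    _ = ∑' k:ℕ, ∑' n:ℕ, fco x m n k := aux_fubini x hx0 hx1 m hm
    _ = _ := ?_
  rw [← tsum_mul_left]
  refine tsum_congr fun k => ?_
  have hcol : ∑' n:ℕ, fco x m n k =
      ((-1:ℝ)^(k+1) * ((2*m+2*k).choose (2*k+1):ℝ) * x^(2*k+1)) *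
        ∑' n:ℕ, 1/((n:ℝ)+1)^(2*(m+k)+1) := by
    rw [show (2*(m+k)+1) = 2*m+2*k+1 by ring, ← tsum_mul_left]
    exact tsum_congr fun n => by rw [fco]
  rw [hcol]
  rw [show -(2*((m:ℂ)+(k:ℂ))) = -(2*(((m+k:ℕ)):ℂ)) by push_cast; ring,
    aux_zderiv_re (m+k) (by omega)]
  set S := ∑' j:ℕ, 1/((j:ℝ)+1)^(2*(m+k)+1) with hS
  have hF1 : ((2*m-1).factorial : ℝ) ≠ 0 := by
    exact_mod_cast Nat.factorial_ne_zero _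
  have hF3 : ((2*k+1).factorial : ℝ) ≠ 0 := by
    exact_mod_cast Nat.factorial_ne_zero _
  have hπ : (π:ℝ) ≠ 0 := Real.pi_ne_zero
  have hC : (((2*m+2*k).choose (2*k+1)) : ℝ) =
      ((2*(m+k)).factorial : ℝ) / (((2*k+1).factorial : ℝ) * ((2*m-1).factorial : ℝ)) := by
    rw [eq_div_iff (by exact mul_ne_zero hF3 hF1)]
    have := Nat.choose_mul_factorial_mul_factorial (show 2*k+1 ≤ 2*m+2*k by omega)
    have h2 : 2*m+2*k - (2*k+1) = 2*m-1 := by omega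
    rw [h2] at this
    have h3 : 2*(m+k) = 2*m+2*k := by ring
    rw [h3, ← mul_assoc]
    exact_mod_cast this
  have hsign : (-1:ℝ)^(m+1) * (-1)^(m+k) = (-1)^(k+1) := by
    rw [← pow_add, show m+1+(m+k) = 2*m + (k+1) by ring, pow_add, pow_mul]
    norm_num
  have hQ : (-1:ℝ)^(m+1) * ((2*π)^(2*m)/(π*((2*m-1).factorial : ℝ))) *
      ((-1:ℝ)^(m+k) * π * ((2*(m+k)).factorial : ℝ) / (2*π)^(2*(m+k)+1) * S *
        (2*π*x)^(2*k+1) / ((2*k+1).factorial : ℝ)) =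
      ((-1:ℝ)^(m+1) * (-1)^(m+k)) *
        ((((2*m+2*k).choose (2*k+1)):ℝ) * x^(2*k+1) * S) := by
    rw [hC]
    have hP : ((2:ℝ)*π) ≠ 0 := by positivity
    have hPp : ((2:ℝ)*π)^(2*(m+k)+1) ≠ 0 := pow_ne_zero _ hP
    field_simp
    ring
  rw [hQ, hsign]
  ring
end

section
/- Let x ∈ (0,1) and let m ∈ ℕ with m ≥ 1. Then the real part of ∑_{n=0}^∞ (n + i x)^{-(2m+1)} equals (-1)^m ( 2 (2π)^{2m} / (2m)! ) · ∑_{k=0}^∞ ζ'_R(−2(m+k)) (2π x)^{2k} / (2k)!. -/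
open Complex Real


lemma zeta_deriv_neg_even (n : ℕ) (hn : 1 ≤ n) :
    deriv riemannZeta (-(2 * (n : ℂ))) =
      (-1) ^ n * (Nat.factorial (2 * n) : ℂ) * riemannZeta (2 * (n : ℂ) + 1)
        / (2 * (2 * (π : ℂ)) ^ (2 * n)) := by
  set s₀ : ℂ := 2 * (n : ℂ) + 1 with hs₀def
  have hres₀ : s₀.re = 2 * n + 1 := by simp [hs₀def]
  have hre : (1 : ℝ) < s₀.re := by
    rw [hres₀]
    have : (1 : ℝ) ≤ n := by exact_mod_cast hn
    nlinarith
  set g : ℂ → ℂ := fun s => 2 * (2 * (π : ℂ)) ^ (-s) * Complex.Gamma s * riemannZeta s with hgdef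
  set c : ℂ → ℂ := fun s => Complex.cos ((π : ℂ) * s / 2) with hcdef
  have hne1 : ∀ s : ℂ, 1 < s.re → s ≠ 1 := by
    intro s hs h
    rw [h] at hs; simp at hs
  have hnenat : ∀ s : ℂ, 1 < s.re → ∀ k : ℕ, s ≠ -k := by
    intro s hs k h
    rw [h] at hs
    simp only [Complex.neg_re, Complex.natCast_re] at hs
    have : (0:ℝ) ≤ (k:ℝ) := by positivity
    linarith
  have hev : ∀ᶠ s in nhds s₀, riemannZeta (1 - s) = g s * c s := by
    have hmem : {s : ℂ | 1 < s.re} ∈ nhds s₀ :=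
      (isOpen_lt continuous_const Complex.continuous_re).mem_nhds hre
    filter_upwards [hmem] with s hs
    rw [riemannZeta_one_sub (hnenat s hs) (hne1 s hs), hgdef, hcdef]
    ring
  -- differentiability of g at s₀
  have hζ : DifferentiableAt ℂ riemannZeta s₀ := differentiableAt_riemannZeta (hne1 _ hre)
  have hΓ : DifferentiableAt ℂ Complex.Gamma s₀ := Complex.differentiableAt_Gamma _ (hnenat _ hre)
  have hpow : DifferentiableAt ℂ (fun s : ℂ => (2 * (π : ℂ)) ^ (-s)) s₀ := by
    apply DifferentiableAt.const_cpow (differentiableAt_id.neg)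
    left
    simp only [ne_eq, mul_eq_zero, not_or]
    constructor
    · norm_num
    · exact_mod_cast Real.pi_ne_zero
  have hg : DifferentiableAt ℂ g s₀ :=
    ((differentiableAt_const 2 |>.mul hpow).mul hΓ).mul hζ
  have hc : HasDerivAt c (-Complex.sin ((π : ℂ) * s₀ / 2) * ((π : ℂ) / 2)) s₀ := by
    have h1 : HasDerivAt (fun s : ℂ => (π : ℂ) * s / 2) ((π : ℂ) / 2) s₀ := by
      simpa using (((hasDerivAt_id s₀).const_mul (π : ℂ)).div_const 2)
    exact (Complex.hasDerivAt_cos _).comp s₀ h1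
  -- the argument of sin/cos
  have harg : (π : ℂ) * s₀ / 2 = ((π / 2 + n * π : ℝ) : ℂ) := by
    rw [hs₀def]
    push_cast
    ring
  have hcos0 : Complex.cos ((π : ℂ) * s₀ / 2) = 0 := by
    rw [harg, ← Complex.ofReal_cos, Real.cos_add_nat_mul_pi, Real.cos_pi_div_two]
    simp
  have hsin : Complex.sin ((π : ℂ) * s₀ / 2) = (-1) ^ n := by
    rw [harg, ← Complex.ofReal_sin, Real.sin_add_nat_mul_pi, Real.sin_pi_div_two]
    push_cast
    ring
  have hF : HasDerivAt (fun s => g s * c s)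
      (g s₀ * (-Complex.sin ((π : ℂ) * s₀ / 2) * ((π : ℂ) / 2))) s₀ := by
    have := hg.hasDerivAt.mul hc
    rw [show c s₀ = 0 from hcos0, mul_zero, zero_add] at this
    exact this
  have h1s0 : (1 : ℂ) - s₀ = -(2 * (n : ℂ)) := by rw [hs₀def]; ring
  have hLd : DifferentiableAt ℂ riemannZeta (1 - s₀) := by
    rw [h1s0]
    apply differentiableAt_riemannZeta
    intro h
    have : ((2 * (n:ℝ)) : ℂ) = -1 := by push_cast; linear_combination -h
    have h2 : (2 * (n:ℝ)) = -1 := by exact_mod_cast this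
    have : (1:ℝ) ≤ n := by exact_mod_cast hn
    linarith
  have hL : HasDerivAt (fun s => riemannZeta (1 - s))
      (deriv riemannZeta (-(2 * (n : ℂ))) * (-1)) s₀ := by
    have h1 : HasDerivAt (fun s : ℂ => 1 - s) (-1) s₀ := by
      simpa using (hasDerivAt_id s₀).const_sub 1
    have := (hLd.hasDerivAt.comp s₀ h1)
    rwa [h1s0] at this
  have hderiv_eq : deriv (fun s => riemannZeta (1 - s)) s₀ = deriv (fun s => g s * c s) s₀ :=
    Filter.EventuallyEq.deriv_eq hev
  have key : deriv riemannZeta (-(2 * (n : ℂ))) * (-1)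
      = g s₀ * (-Complex.sin ((π : ℂ) * s₀ / 2) * ((π : ℂ) / 2)) := by
    rw [← hL.deriv, ← hF.deriv, hderiv_eq]
  rw [hsin] at key
  -- evaluate g s₀
  have hΓval : Complex.Gamma s₀ = (Nat.factorial (2 * n) : ℂ) := by
    have : s₀ = ((2 * n : ℕ) : ℂ) + 1 := by rw [hs₀def]; push_cast; ring
    rw [this, Complex.Gamma_nat_eq_factorial]
  have hpowval : (2 * (π : ℂ)) ^ (-s₀) = ((2 * (π : ℂ)) ^ (2 * n + 1))⁻¹ := by
    have : -s₀ = ((-(2 * n + 1) : ℤ) : ℂ) := by rw [hs₀def]; push_cast; ring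
    rw [this, Complex.cpow_intCast, zpow_neg]
    norm_cast
  have hπ : ((2 : ℂ) * π) ^ (2 * n) ≠ 0 := by
    apply pow_ne_zero
    simp only [ne_eq, mul_eq_zero, not_or]
    exact ⟨by norm_num, by exact_mod_cast Real.pi_ne_zero⟩
  have hπ' : ((2 : ℂ) * π) ^ (2 * n + 1) ≠ 0 := by
    apply pow_ne_zero
    simp only [ne_eq, mul_eq_zero, not_or]
    exact ⟨by norm_num, by exact_mod_cast Real.pi_ne_zero⟩
  have key2 : deriv riemannZeta (-(2 * (n : ℂ)))
      = g s₀ * ((-1:ℂ) ^ n * ((π : ℂ) / 2)) := by linear_combination -key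
  rw [key2, hgdef]
  simp only [hpowval, hΓval]
  rw [hs₀def]
  field_simp
  ring



lemma term_expansion (x : ℝ) (hx0 : 0 < x) (m : ℕ) (n : ℕ) (hn : 1 ≤ n) (hxn : x < n) :
    HasSum (fun k : ℕ => (-1)^k * ((2*k+2*m).choose (2*m) : ℝ) * x^(2*k) * (1/(n:ℝ)^(2*m+2*k+1)))
      ((((n:ℂ) + Complex.I * x) ^ (-(2*(m:ℂ)+1))).re) := by
  have hn0 : (n:ℝ) ≠ 0 := by positivity
  have hn0' : (n:ℂ) ≠ 0 := by exact_mod_cast Nat.cast_ne_zero.mpr (by omega)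
  have hexp : (-(2*(m:ℂ)+1)) = ((-(2*(m:ℤ)+1) : ℤ) : ℂ) := by push_cast; ring
  set z : ℂ := (n:ℂ) + Complex.I * x with hzdef
  have hzpow : z ^ (-(2*(m:ℂ)+1)) = (z ^ (2*m+1))⁻¹ := by
    rw [hexp, Complex.cpow_intCast]
    rw [show (-(2*(m:ℤ)+1)) = -(2*m+1 : ℕ) by push_cast; ring, zpow_neg, zpow_natCast]
  rw [hzpow]
  set r : ℂ := -Complex.I * x / n with hrdef
  have hr : ‖r‖ < 1 := by
    rw [hrdef]
    simp only [norm_div, norm_mul, norm_neg, Complex.norm_I, one_mul, Complex.norm_real,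
      Complex.norm_natCast, Real.norm_eq_abs, abs_of_pos hx0]
    rw [div_lt_one (by positivity)]
    exact hxn
  have hr1 : (1 : ℂ) - r ≠ 0 := by
    intro h
    have : r = 1 := by linear_combination -h
    rw [this] at hr; simp at hr
  have hz : z = (n:ℂ) * (1 - r) := by
    rw [hzdef, hrdef]
    field_simp
    ring
  have hb := hasSum_choose_mul_geometric_of_norm_lt_one (𝕜 := ℂ) (2*m) hr
  have hb2 := hb.mul_left (((n:ℂ) ^ (2*m+1))⁻¹)
  have hval : ((n:ℂ) ^ (2*m+1))⁻¹ * (1 / (1-r) ^ (2*m+1)) = (z ^ (2*m+1))⁻¹ := by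
    rw [hz, mul_pow, mul_inv]
    field_simp
  rw [hval] at hb2
  have hre := Complex.hasSum_re hb2
  -- rewrite terms
  set w : ℕ → ℝ := fun p => ((p+2*m).choose (2*m) : ℝ) * (x/n)^p / (n:ℝ)^(2*m+1) with hwdef
  have hfp : ∀ p : ℕ, ((n:ℂ) ^ (2*m+1))⁻¹ * (((p+2*m).choose (2*m) : ℂ) * r ^ p)
      = (w p : ℂ) * (-Complex.I) ^ p := by
    intro p
    rw [hwdef, hrdef]
    push_cast
    rw [show (-Complex.I * x / n : ℂ) = (-Complex.I) * ((x:ℂ)/(n:ℂ)) by ring, mul_pow]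
    ring
  simp only [hfp] at hre
  have hinj : Function.Injective (fun k : ℕ => 2*k) := fun a b h => by dsimp at h; omega
  have h0 : ∀ p, p ∉ Set.range (fun k : ℕ => 2*k) →
      ((w p : ℂ) * (-Complex.I) ^ p).re = 0 := by
    intro p hp
    have hodd : Odd p := by simpa using hp
    obtain ⟨t, ht⟩ := hodd
    have hpt : p = 2*t+1 := by omega
    subst hpt
    have h1 : (-Complex.I) ^ (2*t+1) = (((-1:ℝ)^t : ℝ) : ℂ) * (-Complex.I) := by
      rw [pow_add, pow_mul]
      push_cast
      norm_num
    rw [h1]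
    simp only [Complex.mul_re, Complex.mul_im, Complex.ofReal_re, Complex.ofReal_im,
      Complex.neg_re, Complex.neg_im, Complex.I_re, Complex.I_im]
    ring
  have heven := (Function.Injective.hasSum_iff hinj h0).2 hre
  have hfun : ((fun p => ((w p : ℂ) * (-Complex.I) ^ p).re) ∘ (fun k : ℕ => 2*k))
      = fun k : ℕ => (-1)^k * ((2*k+2*m).choose (2*m) : ℝ) * x^(2*k) * (1/(n:ℝ)^(2*m+2*k+1)) := by
    funext k
    simp only [Function.comp_apply]
    have h1 : (-Complex.I) ^ (2*k) = ((((-1:ℝ))^k : ℝ) : ℂ) := by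
      rw [pow_mul]
      push_cast
      norm_num
    rw [h1, ← Complex.ofReal_mul, Complex.ofReal_re, hwdef]
    have h2 : (x/(n:ℝ))^(2*k) / (n:ℝ)^(2*m+1) = x^(2*k) * (1/(n:ℝ)^(2*m+2*k+1)) := by
      rw [div_pow]
      field_simp
      ring
    calc ((2*k+2*m).choose (2*m) : ℝ) * (x/n)^(2*k) / (n:ℝ)^(2*m+1) * (-1)^k
        = (-1)^k * ((2*k+2*m).choose (2*m) : ℝ) * ((x/(n:ℝ))^(2*k) / (n:ℝ)^(2*m+1)) := by ring
      _ = _ := by rw [h2]; ring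
  rwa [hfun] at heven


lemma zeta_deriv_re (n : ℕ) (hn : 1 ≤ n) :
    (deriv riemannZeta (-(2 * (n : ℂ)))).re
      = (-1) ^ n * ((2 * n).factorial : ℝ) * (∑' j : ℕ, 1 / (j : ℝ) ^ (2 * n + 1))
        / (2 * (2 * π) ^ (2 * n)) := by
  have h1 := zeta_deriv_neg_even n hn
  have h2 : riemannZeta (2 * (n : ℂ) + 1)
      = (((∑' j : ℕ, 1 / (j : ℝ) ^ (2 * n + 1)) : ℝ) : ℂ) := by
    rw [show (2 * (n : ℂ) + 1) = ((2 * n + 1 : ℕ) : ℂ) by push_cast; ring,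
      zeta_nat_eq_tsum_of_gt_one (by omega), Complex.ofReal_tsum]
    congr 1
    funext j
    push_cast
    ring
  rw [h1, h2, show ((-1 : ℂ)) ^ n * ((2 * n).factorial : ℂ)
      * (((∑' j : ℕ, 1 / (j : ℝ) ^ (2 * n + 1)) : ℝ) : ℂ) / (2 * (2 * (π : ℂ)) ^ (2 * n))
      = ((((-1 : ℝ)) ^ n * ((2 * n).factorial : ℝ) * (∑' j : ℕ, 1 / (j : ℝ) ^ (2 * n + 1))
        / (2 * (2 * π) ^ (2 * n)) : ℝ) : ℂ) by push_cast; ring]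
  exact Complex.ofReal_re _

set_option maxHeartbeats 1000000 in
/-- For `x ∈ (0,1)` and `m ≥ 1`, the real part of `ζ_H(2m+1, ix) = ∑_{n≥0} (n+ix)^{-(2m+1)}`
is given by a series involving the values `ζ'_R(-2(m+k))` of the derivative of the
Riemann zeta function at negative even integers. -/
theorem re_hurwitzZeta_pos_odd (x : ℝ) (hx : x ∈ Set.Ioo (0 : ℝ) 1) (m : ℕ) (hm : 1 ≤ m) :
    (∑' n : ℕ, ((n : ℂ) + Complex.I * x) ^ (-(2 * (m : ℂ) + 1))).re =
      (-1) ^ m * (2 * (2 * π) ^ (2 * m) / (Nat.factorial (2 * m) : ℝ)) *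
        ∑' k : ℕ, (deriv riemannZeta (-(2 * ((m : ℂ) + (k : ℂ))))).re *
          (2 * π * x) ^ (2 * k) / (Nat.factorial (2 * k) : ℝ) := by
  obtain ⟨hx0, hx1⟩ := hx
  set Z : ℕ → ℝ := fun p => ∑' j : ℕ, 1 / (j : ℝ) ^ (2 * p + 1) with hZdef
  set a : ℕ → ℕ → ℝ := fun n k => (-1) ^ k * ((2 * k + 2 * m).choose (2 * m) : ℝ)
    * x ^ (2 * k) * (1 / (n : ℝ) ^ (2 * m + 2 * k + 1)) with hadef
  set f : ℕ → ℂ := fun n => ((n : ℂ) + Complex.I * x) ^ (-(2 * (m : ℂ) + 1)) with hfdef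
  have hfzpow : ∀ n : ℕ, f n = (((n : ℂ) + Complex.I * x) ^ (2 * m + 1))⁻¹ := by
    intro n
    rw [hfdef]
    simp only
    rw [show (-(2 * (m : ℂ) + 1)) = ((-(2 * m + 1 : ℕ) : ℤ) : ℂ) by push_cast; ring,
      Complex.cpow_intCast, zpow_neg, zpow_natCast]
  -- summability of f
  have hsumf : Summable f := by
    apply Summable.of_norm_bounded_eventually (g := fun n : ℕ => 1 / (n : ℝ) ^ (2 * m + 1))
      (Real.summable_one_div_nat_pow.mpr (by omega))
    rw [Nat.cofinite_eq_atTop]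
    filter_upwards [Filter.eventually_ge_atTop 1] with n hn
    have hre : ((n : ℂ) + Complex.I * x).re = n := by
      simp [Complex.add_re, Complex.mul_re]
    have hnorm : (n : ℝ) ≤ ‖(n : ℂ) + Complex.I * x‖ := by
      have h := Complex.abs_re_le_norm ((n : ℂ) + Complex.I * x)
      rw [hre] at h
      calc (n : ℝ) ≤ |(n : ℝ)| := le_abs_self _
        _ ≤ _ := h
    rw [hfzpow n, norm_inv, norm_pow, one_div]
    apply inv_anti₀ (by positivity)
    exact pow_le_pow_left₀ (by positivity) hnorm _
  have hsumfre : Summable fun n => (f n).re := (Complex.hasSum_re hsumf.hasSum).summable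
  have hf0 : (f 0).re = 0 := by
    rw [hfzpow 0]
    have hb : (((0 : ℕ) : ℂ) + Complex.I * x) ^ (2 * m + 1)
        = ((((-1 : ℝ) ^ m * x ^ (2 * m + 1)) : ℝ) : ℂ) * Complex.I := by
      push_cast
      rw [zero_add, mul_pow, pow_add, pow_mul, Complex.I_sq, pow_one]
      push_cast
      ring
    rw [hb, Complex.inv_re, Complex.re_ofReal_mul]
    simp
  -- per-term expansion
  have hterm : ∀ j : ℕ, HasSum (a (j + 1)) ((f (j + 1)).re) := by
    intro j
    have h1 : x < ((j + 1 : ℕ) : ℝ) := by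
      have : (1 : ℝ) ≤ ((j + 1 : ℕ) : ℝ) := by exact_mod_cast Nat.one_le_iff_ne_zero.mpr (by omega)
      linarith
    have := term_expansion x hx0 m (j + 1) (by omega) h1
    rw [hfzpow (j + 1)]
    have h2 : ((((j + 1 : ℕ) : ℂ) + Complex.I * x) ^ (-(2 * (m : ℂ) + 1)))
        = ((((j + 1 : ℕ) : ℂ) + Complex.I * x) ^ (2 * m + 1))⁻¹ := by
      rw [show (-(2 * (m : ℂ) + 1)) = ((-(2 * m + 1 : ℕ) : ℤ) : ℂ) by push_cast; ring,
        Complex.cpow_intCast, zpow_neg, zpow_natCast]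
    rw [h2] at this
    exact this
  -- summability for the interchange
  have hxnorm : ‖x‖ < 1 := by rw [Real.norm_eq_abs, abs_of_pos hx0]; exact hx1
  have hcsum : ∀ k : ℕ, Summable fun j : ℕ => 1 / (((j + 1 : ℕ)) : ℝ) ^ (2 * m + 2 * k + 1) := by
    intro k
    have := (summable_nat_add_iff 1).2
      (Real.summable_one_div_nat_pow.mpr (show 1 < 2 * m + 2 * k + 1 by omega))
    exact this
  set B : ℝ := ∑' j : ℕ, 1 / (((j + 1 : ℕ)) : ℝ) ^ 2 with hBdef
  have hBsum : Summable fun j : ℕ => 1 / (((j + 1 : ℕ)) : ℝ) ^ 2 :=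
    (summable_nat_add_iff 1).2 (Real.summable_one_div_nat_pow.mpr (by omega))
  have hSB : ∀ k : ℕ, (∑' j : ℕ, 1 / (((j + 1 : ℕ)) : ℝ) ^ (2 * m + 2 * k + 1)) ≤ B := by
    intro k
    apply Summable.tsum_le_tsum _ (hcsum k) hBsum
    intro j
    apply one_div_le_one_div_of_le (by positivity)
    apply pow_le_pow_right₀ _ (by omega)
    exact_mod_cast Nat.one_le_iff_ne_zero.mpr (by omega)
  set c : ℕ → ℝ := fun k => ((2 * k + 2 * m).choose (2 * m) : ℝ) * x ^ (2 * k) with hcdef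
  have hcnonneg : ∀ k, 0 ≤ c k := fun k => by positivity
  have hcBsum : Summable fun k => c k * B := by
    apply Summable.mul_right
    have h := summable_choose_mul_geometric_of_norm_lt_one (R := ℝ) (2 * m) hxnorm
    have hinj2 : Function.Injective (fun k : ℕ => 2 * k) := fun a b hab => by dsimp at hab; omega
    have h2 := h.comp_injective hinj2
    exact h2.congr fun k => by simp [hcdef, Function.comp]
  have hG : Summable fun p : ℕ × ℕ =>
      c p.1 * (1 / (((p.2 + 1 : ℕ)) : ℝ) ^ (2 * m + 2 * p.1 + 1)) := by
    rw [summable_prod_of_nonneg (fun p => by positivity)]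
    constructor
    · intro k
      simpa using (hcsum k).mul_left (c k)
    · apply Summable.of_nonneg_of_le (fun k => tsum_nonneg fun j => by positivity) _ hcBsum
      intro k
      show ∑' (y : ℕ), c k * (1 / (((y + 1 : ℕ)) : ℝ) ^ (2 * m + 2 * k + 1)) ≤ c k * B
      rw [tsum_mul_left]
      exact mul_le_mul_of_nonneg_left (hSB k) (hcnonneg k)
  have hFsum : Summable (Function.uncurry fun j k => a (j + 1) k) := by
    apply Summable.of_abs
    have h2 : Summable ((fun p : ℕ × ℕ =>
        c p.1 * (1 / (((p.2 + 1 : ℕ)) : ℝ) ^ (2 * m + 2 * p.1 + 1))) ∘ (Equiv.prodComm ℕ ℕ)) :=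
      (Equiv.prodComm ℕ ℕ).summable_iff.mpr hG
    apply h2.congr
    intro p
    simp only [Function.comp_apply, Equiv.prodComm_apply, Prod.snd_swap, Prod.fst_swap,
      Function.uncurry]
    rw [hadef, hcdef]
    simp only
    rw [abs_mul, abs_mul, abs_mul, _root_.abs_pow, _root_.abs_pow, abs_neg, abs_one, one_pow, one_mul,
      Nat.abs_cast, abs_of_pos hx0, abs_of_pos (by positivity : (0:ℝ) < 1 / (((p.1 + 1 : ℕ)) : ℝ) ^ (2 * m + 2 * p.2 + 1))]
  have hswap : ∑' (j : ℕ) (k : ℕ), a (j + 1) k = ∑' (k : ℕ) (j : ℕ), a (j + 1) k :=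
    (Summable.tsum_comm hFsum).symm
  -- inner sums
  have hinner : ∀ k : ℕ, ∑' j : ℕ, a (j + 1) k
      = (-1) ^ k * ((2 * k + 2 * m).choose (2 * m) : ℝ) * x ^ (2 * k) * Z (m + k) := by
    intro k
    have h1 : ∀ j : ℕ, a (j + 1) k
        = ((-1) ^ k * ((2 * k + 2 * m).choose (2 * m) : ℝ) * x ^ (2 * k))
          * (1 / (((j + 1 : ℕ)) : ℝ) ^ (2 * m + 2 * k + 1)) := by
      intro j; rw [hadef]
    rw [tsum_congr h1, tsum_mul_left]
    have h2 : Z (m + k) = ∑' j : ℕ, 1 / (((j + 1 : ℕ)) : ℝ) ^ (2 * m + 2 * k + 1) := by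
      rw [hZdef]
      simp only
      have hq : 2 * (m + k) + 1 = 2 * m + 2 * k + 1 := by omega
      rw [hq]
      rw [Summable.tsum_eq_zero_add (Real.summable_one_div_nat_pow.mpr
        (show 1 < 2 * m + 2 * k + 1 by omega))]
      norm_num
    rw [← h2]
  -- zeta derivative values
  have hD : ∀ k : ℕ, (deriv riemannZeta (-(2 * ((m : ℂ) + (k : ℂ))))).re
      = (-1) ^ (m + k) * ((2 * (m + k)).factorial : ℝ) * Z (m + k)
        / (2 * (2 * π) ^ (2 * (m + k))) := by
    intro k
    have h := zeta_deriv_re (m + k) (by omega)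
    rw [show -(2 * ((m : ℂ) + (k : ℂ))) = -(2 * (((m + k : ℕ)) : ℂ)) by push_cast; ring, h]
  -- assemble LHS
  have hLHS : (∑' n : ℕ, f n).re
      = ∑' k : ℕ, (-1) ^ k * ((2 * k + 2 * m).choose (2 * m) : ℝ) * x ^ (2 * k) * Z (m + k) := by
    rw [Complex.re_tsum hsumf, Summable.tsum_eq_zero_add hsumfre, hf0, zero_add]
    rw [tsum_congr (fun j => (hterm j).tsum_eq.symm), hswap]
    exact tsum_congr hinner
  rw [hLHS]
  -- assemble RHS
  rw [← tsum_mul_left]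
  apply tsum_congr
  intro k
  rw [hD k]
  have hch : ((2 * k + 2 * m).choose (2 * m) : ℝ) * ((2 * m).factorial : ℝ)
      * ((2 * k).factorial : ℝ) = ((2 * (m + k)).factorial : ℝ) := by
    have h := Nat.choose_mul_factorial_mul_factorial (show 2 * m ≤ 2 * k + 2 * m by omega)
    have h2 : 2 * k + 2 * m - 2 * m = 2 * k := by omega
    rw [h2] at h
    have h4 : (2 * (m + k)).factorial = (2 * k + 2 * m).factorial := by congr 1; omega
    rw [h4]
    exact_mod_cast h
  have hsign : (-1 : ℝ) ^ m * (-1) ^ (m + k) = (-1) ^ k := by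
    rw [← pow_add, show m + (m + k) = 2 * m + k by omega, pow_add, pow_mul]
    norm_num
  have hpow1 : (2 * π : ℝ) ^ (2 * (m + k)) = (2 * π) ^ (2 * m) * (2 * π) ^ (2 * k) := by
    rw [← pow_add]; congr 1; omega
  have hpow2 : (2 * π * x : ℝ) ^ (2 * k) = (2 * π) ^ (2 * k) * x ^ (2 * k) := by
    rw [mul_pow]
  have hπ : (2 * π : ℝ) ≠ 0 := by positivity
  have hf1 : ((2 * m).factorial : ℝ) ≠ 0 := by positivity
  have hf2 : ((2 * k).factorial : ℝ) ≠ 0 := by positivity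
  rw [hpow1, hpow2]
  field_simp
  have hcomb : ((-1 : ℝ) ^ m * (-1) ^ (m + k))
      * (((2 * k + 2 * m).choose (2 * m) : ℝ) * ((2 * m).factorial : ℝ) * ((2 * k).factorial : ℝ))
      = (-1) ^ k * ((2 * (m + k)).factorial : ℝ) := by
    rw [hch, hsign]
  linear_combination (Z (m + k)
      * (-1 : ℝ) ^ k) * hch
    - (Z (m + k)
      * ((2 * (m + k)).factorial : ℝ)) * hsign
end
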